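/- arXiv:1510.03598 — 7 statements merged into one kernel-verified Lean document; each statement's English description precedes it below -/
import Mathlib

section
/- Every finite simple graph is an induced subgraph of a self 2-distance graph: for every finite simple graph Γ there exists a finite simple graph H such that H₂ is isomorphic to H and Γ is isomorphic to an induced subgraph of H. -/
open SimpleGraph

/-- The 2-distance graph of a graph `G`: two distinct vertices are adjacent
iff their distance in `G` equals `2`. -/
def twoDistGraph {V : Type*} (G : SimpleGraph V) : SimpleGraph V where
  Adj u v := G.dist u v = 2
  symm := by
    constructor
    intro u v h
    show G.dist v u = 2
    rwa [SimpleGraph.dist_comm]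
  loopless := by
    constructor
    intro v h
    show False
    simp [SimpleGraph.dist_self] at h

/-- `G` has an `n`-cycle subgraph: `n` distinct vertices `v 0, …, v (n-1)` with
`v i` adjacent to `v (i+1 mod n)` for all `i`. -/
def HasNCycle {V : Type*} (G : SimpleGraph V) (n : ℕ) : Prop :=
  ∃ v : ZMod n → V, Function.Injective v ∧ ∀ i, G.Adj (v i) (v (i + 1))

/-- The edged product `C₅|C₃`: a pentagon and a triangle glued along an edge. -/
def C5C3 : SimpleGraph (Fin 6) :=
  SimpleGraph.fromEdgeSet {s(0,1), s(1,2), s(2,3), s(3,4), s(4,5), s(5,0), s(1,5)}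

/-! ### Auxiliary material -/

lemma dist_eq_two_iff' {V : Type*} (G : SimpleGraph V) (u v : V) :
    G.dist u v = 2 ↔ u ≠ v ∧ ¬G.Adj u v ∧ ∃ w, G.Adj u w ∧ G.Adj w v := by
  constructor
  · intro h
    have hne : u ≠ v := by rintro rfl; simp [SimpleGraph.dist_self] at h
    have hr : G.Reachable u v := SimpleGraph.Reachable.of_dist_ne_zero (by omega)
    obtain ⟨p, hp⟩ := hr.exists_walk_length_eq_dist
    rw [h] at hp
    have hadj : ¬ G.Adj u v := fun ha => by
      have := SimpleGraph.dist_eq_one_iff_adj.mpr ha; omega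
    refine ⟨hne, hadj, ?_⟩
    cases p with
    | nil => simp at hp
    | cons h1 q =>
      cases q with
      | nil => simp at hp
      | cons h2 r =>
        cases r with
        | nil => exact ⟨_, h1, h2⟩
        | cons h3 s => simp [SimpleGraph.Walk.length_cons] at hp
  · rintro ⟨hne, hna, w, h1, h2⟩
    have hle : G.dist u v ≤ 2 := by
      have := SimpleGraph.dist_le (SimpleGraph.Walk.cons h1 h2.toWalk)
      simpa using this
    have h0 : G.dist u v ≠ 0 := by
      intro h0
      rcases SimpleGraph.dist_eq_zero_iff_eq_or_not_reachable.mp h0 with h' | h'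
      · exact hne h'
      · exact h' (SimpleGraph.Walk.cons h1 h2.toWalk).reachable
    have h1' : G.dist u v ≠ 1 := fun hh => hna (SimpleGraph.dist_eq_one_iff_adj.mp hh)
    omega

/-- Adjacency on `Fin 4` extra vertices: edges `{0,1}, {2,3}, {1,3}`. -/
def extraAdj : Fin 4 → Fin 4 → Bool := fun i j =>
  (i == 0 && j == 1) || (i == 1 && j == 0) || (i == 2 && j == 3) || (i == 3 && j == 2) ||
    (i == 1 && j == 3) || (i == 3 && j == 1)

/-- The base graph: `G` (on `Option V`, with `none` isolated in `G` itself) together with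
four extra vertices `0,1,2,3` where `0` and `2` are adjacent to all of `Option V`,
and extra edges `{0,1}, {2,3}, {1,3}`. Both this graph and its complement are connected
with diameter at most `2`. -/
def baseAdj {V : Type*} (G : SimpleGraph V) :
    (Option V ⊕ Fin 4) → (Option V ⊕ Fin 4) → Prop
  | .inl a, .inl b => ∃ u v, G.Adj u v ∧ a = some u ∧ b = some v
  | .inl _, .inr i => i = 0 ∨ i = 2
  | .inr i, .inl _ => i = 0 ∨ i = 2
  | .inr i, .inr j => extraAdj i j = true

lemma baseAdj_inr_iff {V : Type*} (G : SimpleGraph V) (i j : Fin 4) :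
    baseAdj G (.inr i) (.inr j) ↔ extraAdj i j = true := Iff.rfl

lemma baseAdj_inl_inr_iff {V : Type*} (G : SimpleGraph V) (a : Option V) (i : Fin 4) :
    baseAdj G (.inl a) (.inr i) ↔ (i = 0 ∨ i = 2) := Iff.rfl

lemma baseAdj_inr_inl_iff {V : Type*} (G : SimpleGraph V) (a : Option V) (i : Fin 4) :
    baseAdj G (.inr i) (.inl a) ↔ (i = 0 ∨ i = 2) := Iff.rfl

lemma baseAdj_symm {V : Type*} (G : SimpleGraph V) :
    ∀ x y, baseAdj G x y → baseAdj G y x := by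
  rintro (a | i) (b | j) h
  · obtain ⟨u, v, huv, rfl, rfl⟩ := h
    exact ⟨v, u, huv.symm, rfl, rfl⟩
  · exact h
  · exact h
  · revert h
    show extraAdj i j = true → extraAdj j i = true
    revert i j; decide

lemma baseAdj_irrefl {V : Type*} (G : SimpleGraph V) : ∀ x, ¬ baseAdj G x x := by
  rintro (a | i) h
  · obtain ⟨u, v, huv, rfl, h2⟩ := h
    rw [Option.some_inj] at h2
    exact G.loopless.irrefl u (h2 ▸ huv)
  · revert h
    show ¬ extraAdj i i = true
    revert i; decide

/-- Every two distinct non-adjacent vertices in the base graph have a common neighbor. -/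
lemma baseAdj_P1 {V : Type*} (G : SimpleGraph V) :
    ∀ x y, x ≠ y → ¬ baseAdj G x y → ∃ w, baseAdj G x w ∧ baseAdj G w y := by
  rintro (a | i) (b | j) hne hna
  · exact ⟨.inr 0, Or.inl rfl, Or.inl rfl⟩
  · -- a vs extra j : j must be 1 or 3
    have hj : j = 0 ∨ j = 1 ∨ j = 2 ∨ j = 3 := by omega
    rcases hj with rfl | rfl | rfl | rfl
    · exact absurd (Or.inl rfl) hna
    · exact ⟨.inr 0, Or.inl rfl, by rw [baseAdj_inr_iff]; decide⟩
    · exact absurd (Or.inr rfl) hna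
    · exact ⟨.inr 2, Or.inr rfl, by rw [baseAdj_inr_iff]; decide⟩
  · have hi : i = 0 ∨ i = 1 ∨ i = 2 ∨ i = 3 := by omega
    rcases hi with rfl | rfl | rfl | rfl
    · exact absurd (Or.inl rfl) hna
    · exact ⟨.inr 0, by rw [baseAdj_inr_iff]; decide, Or.inl rfl⟩
    · exact absurd (Or.inr rfl) hna
    · exact ⟨.inr 2, by rw [baseAdj_inr_iff]; decide, Or.inr rfl⟩
  · -- extras : non-edges {0,2},{0,3},{1,2}
    have hi : i = 0 ∨ i = 1 ∨ i = 2 ∨ i = 3 := by omega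
    have hj : j = 0 ∨ j = 1 ∨ j = 2 ∨ j = 3 := by omega
    rcases hi with rfl | rfl | rfl | rfl <;> rcases hj with rfl | rfl | rfl | rfl <;>
      first
      | exact absurd rfl hne
      | exact absurd ((baseAdj_inr_iff G _ _).mpr (by decide)) hna
      | exact ⟨.inl none, Or.inl rfl, Or.inl rfl⟩
      | exact ⟨.inl none, Or.inr rfl, Or.inr rfl⟩
      | exact ⟨.inr 1, by rw [baseAdj_inr_iff]; decide, by rw [baseAdj_inr_iff]; decide⟩
      | exact ⟨.inr 3, by rw [baseAdj_inr_iff]; decide, by rw [baseAdj_inr_iff]; decide⟩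
      | exact ⟨.inl none, Or.inl rfl, Or.inr rfl⟩
      | exact ⟨.inl none, Or.inr rfl, Or.inl rfl⟩

/-- Every two adjacent vertices in the base graph have a common non-neighbor
distinct from both. -/
lemma baseAdj_P2 {V : Type*} (G : SimpleGraph V) :
    ∀ x y, baseAdj G x y →
      ∃ w, w ≠ x ∧ w ≠ y ∧ ¬ baseAdj G x w ∧ ¬ baseAdj G w y := by
  rintro (a | i) (b | j) h
  · refine ⟨.inr 1, by simp, by simp, ?_, ?_⟩
    · rw [baseAdj_inl_inr_iff]; decide
    · rw [baseAdj_inr_inl_iff]; decide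
  · -- a vs extra j, j = 0 or 2
    rcases h with rfl | rfl
    · refine ⟨.inr 3, by simp, by simp, ?_, by rw [baseAdj_inr_iff]; decide⟩
      rw [baseAdj_inl_inr_iff]; decide
    · refine ⟨.inr 1, by simp, by simp, ?_, by rw [baseAdj_inr_iff]; decide⟩
      rw [baseAdj_inl_inr_iff]; decide
  · rcases h with rfl | rfl
    · refine ⟨.inr 3, by simp, by simp, by rw [baseAdj_inr_iff]; decide, ?_⟩
      rw [baseAdj_inr_inl_iff]; decide
    · refine ⟨.inr 1, by simp, by simp, by rw [baseAdj_inr_iff]; decide, ?_⟩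
      rw [baseAdj_inr_inl_iff]; decide
  · -- edges {0,1},{2,3},{1,3}
    replace h : extraAdj i j = true := h
    have hi : i = 0 ∨ i = 1 ∨ i = 2 ∨ i = 3 := by omega
    have hj : j = 0 ∨ j = 1 ∨ j = 2 ∨ j = 3 := by omega
    rcases hi with rfl | rfl | rfl | rfl <;> rcases hj with rfl | rfl | rfl | rfl <;>
      first
      | exact absurd h (by decide)
      | exact ⟨.inr 2, by simp, by simp, by rw [baseAdj_inr_iff]; decide,
          by rw [baseAdj_inr_iff]; decide⟩
      | exact ⟨.inr 0, by simp, by simp, by rw [baseAdj_inr_iff]; decide,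
          by rw [baseAdj_inr_iff]; decide⟩
      | exact ⟨.inl none, by simp, by simp, by rw [baseAdj_inr_inl_iff]; decide,
          by rw [baseAdj_inl_inr_iff]; decide⟩

/-- The big graph: disjoint union of the base graph and its complement. -/
def bigGraph {V : Type*} (G : SimpleGraph V) :
    SimpleGraph ((Option V ⊕ Fin 4) ⊕ (Option V ⊕ Fin 4)) where
  Adj x y := match x, y with
    | .inl a, .inl b => baseAdj G a b
    | .inr a, .inr b => a ≠ b ∧ ¬ baseAdj G a b
    | _, _ => False
  symm := by
    constructor
    rintro (a | a) (b | b) h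
    · exact baseAdj_symm G a b h
    · exact h.elim
    · exact h.elim
    · exact ⟨h.1.symm, fun hh => h.2 (baseAdj_symm G b a hh)⟩
  loopless := by
    constructor
    rintro (a | a) h
    · exact baseAdj_irrefl G a h
    · exact h.1 rfl

lemma bigGraph_key {V : Type*} (G : SimpleGraph V) :
    ∀ a b, (bigGraph G).dist a b = 2 ↔ (bigGraph G).Adj a.swap b.swap := by
  intro a b
  rw [dist_eq_two_iff']
  rcases a with (x | x) <;> rcases b with (y | y)
  · -- both in the base copy; swap lands in the complement copy
    show _ ↔ (x ≠ y ∧ ¬ baseAdj G x y)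
    constructor
    · rintro ⟨hne, hna, -⟩
      exact ⟨fun h => hne (by rw [h]), hna⟩
    · rintro ⟨hne, hna⟩
      obtain ⟨w, hw1, hw2⟩ := baseAdj_P1 G x y hne hna
      exact ⟨by simpa using hne, hna, .inl w, hw1, hw2⟩
  · -- cross: both sides false
    constructor
    · rintro ⟨-, -, (w | w), h1, h2⟩
      · exact h2
      · exact h1
    · exact fun h => (h : False).elim
  · constructor
    · rintro ⟨-, -, (w | w), h1, h2⟩
      · exact h1
      · exact h2
    · exact fun h => (h : False).elim
  · -- both in the complement copy
    show _ ↔ baseAdj G x y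
    constructor
    · rintro ⟨hne, hna, -⟩
      have hxy : x ≠ y := fun h => hne (by rw [h])
      by_contra hb
      exact hna ⟨hxy, hb⟩
    · intro h
      have hxy : x ≠ y := fun hh => baseAdj_irrefl G x (hh ▸ h)
      obtain ⟨w, hw1, hw2, hw3, hw4⟩ := baseAdj_P2 G x y h
      refine ⟨by simpa using hxy, ?_, .inr w, ⟨fun hh => hw1 hh.symm, hw3⟩,
        ⟨hw2, hw4⟩⟩
      rintro ⟨-, hb⟩
      exact hb h

/-- `twoDistGraph` respects isomorphisms. -/
def twoDistGraphIso {V W : Type*} {A : SimpleGraph V} {B : SimpleGraph W} (φ : A ≃g B) :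
    twoDistGraph A ≃g twoDistGraph B where
  toEquiv := φ.toEquiv
  map_rel_iff' := by
    intro a b
    show B.dist (φ a) (φ b) = 2 ↔ A.dist a b = 2
    rw [dist_eq_two_iff', dist_eq_two_iff']
    constructor
    · rintro ⟨hne, hna, w, h1, h2⟩
      refine ⟨fun h => hne (by rw [h]), fun h => hna (φ.map_rel_iff.mpr h), φ.symm w, ?_, ?_⟩
      · exact φ.map_rel_iff.mp (by simpa using h1)
      · exact φ.map_rel_iff.mp (by simpa using h2)
    · rintro ⟨hne, hna, w, h1, h2⟩
      exact ⟨by simpa using hne, fun h => hna (φ.map_rel_iff.mp h), φ w,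
        φ.map_rel_iff.mpr h1, φ.map_rel_iff.mpr h2⟩

/-- Every finite graph is an induced subgraph of a self 2-distance graph. -/
theorem exists_selfTwoDist_inducedSupergraph {V : Type*} [Fintype V] (G : SimpleGraph V) :
    ∃ (n : ℕ) (H : SimpleGraph (Fin n)),
      Nonempty (twoDistGraph H ≃g H) ∧ Nonempty (G ↪g H) := by
  classical
  set T := (Option V ⊕ Fin 4) ⊕ (Option V ⊕ Fin 4) with hT
  let e : Fin (Fintype.card T) ≃ T := (Fintype.equivFin T).symm
  refine ⟨Fintype.card T, (bigGraph G).comap e, ?_, ?_⟩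
  · -- self 2-distance
    have ι : (bigGraph G).comap e.toEmbedding ≃g bigGraph G := SimpleGraph.Iso.comap e (bigGraph G)
    have big : twoDistGraph (bigGraph G) ≃g bigGraph G := by
      refine ⟨Equiv.sumComm _ _, ?_⟩
      intro a b
      exact (bigGraph_key G a b).symm
    exact ⟨(twoDistGraphIso ι).trans (big.trans ι.symm)⟩
  · -- embedding
    have f : G ↪g bigGraph G := by
      refine ⟨⟨fun v => Sum.inl (Sum.inl (some v)), ?_⟩, ?_⟩
      · intro u v h
        simpa using h
      · intro u v
        show baseAdj G (Sum.inl (some u)) (Sum.inl (some v)) ↔ G.Adj u v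
        constructor
        · rintro ⟨a, b, hab, ha, hb⟩
          rw [Option.some_inj] at ha hb
          exact ha ▸ hb ▸ hab
        · exact fun h => ⟨u, v, h, rfl, rfl⟩
    have ι : (bigGraph G).comap e.toEmbedding ≃g bigGraph G := SimpleGraph.Iso.comap e (bigGraph G)
    exact ⟨f.trans ι.symm.toEmbedding⟩
end

section
/- Let Γ be a finite connected self 2-distance graph with at least two vertices that is not isomorphic to the cycle graph Cₙ for any odd n ≥ 5. Then the girth of Γ equals 3. -/
open SimpleGraph

namespace SelfTwoDistAux

variable {V : Type*} {G : SimpleGraph V}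

lemma getVert_inj {u v : V} (p : G.Walk u v) (hp : p.IsPath) :
    ∀ i j, i ≤ p.length → j ≤ p.length → p.getVert i = p.getVert j → i = j := by
  induction p with
  | nil => intro i j hi hj _; simp_all
  | cons h q ih =>
    rename_i x y z
    intro i j hi hj heq
    rw [SimpleGraph.Walk.cons_isPath_iff] at hp
    match i, j with
    | 0, 0 => rfl
    | 0, j+1 =>
      exfalso
      apply hp.2
      rw [SimpleGraph.Walk.mem_support_iff_exists_getVert]
      refine ⟨j, ?_, ?_⟩
      · simpa [SimpleGraph.Walk.getVert_cons_succ, SimpleGraph.Walk.getVert_zero] using heq.symm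
      · simpa [SimpleGraph.Walk.length_cons] using hj
    | i+1, 0 =>
      exfalso
      apply hp.2
      rw [SimpleGraph.Walk.mem_support_iff_exists_getVert]
      refine ⟨i, ?_, ?_⟩
      · simpa [SimpleGraph.Walk.getVert_cons_succ, SimpleGraph.Walk.getVert_zero] using heq
      · simpa [SimpleGraph.Walk.length_cons] using hi
    | i+1, j+1 =>
      have := ih hp.1 i j (by simpa [SimpleGraph.Walk.length_cons] using hi)
        (by simpa [SimpleGraph.Walk.length_cons] using hj)
        (by simpa [SimpleGraph.Walk.getVert_cons_succ] using heq)
      omega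

lemma color_walk_parity (c : V → Bool) (hc : ∀ {x y : V}, G.Adj x y → c x ≠ c y) :
    ∀ {u v : V} (w : G.Walk u v), (c u = c v ↔ Even w.length) := by
  intro u v w
  induction w with
  | nil => simp
  | cons h q ih =>
    have h1 := hc h
    rw [SimpleGraph.Walk.length_cons, Nat.even_add_one, ← ih]
    revert h1
    rename_i a b d
    cases c a <;> cases c b <;> cases c d <;> simp

end SelfTwoDistAux

open SelfTwoDistAux

/-- A connected self 2-distance graph (with at least two vertices) which is not
an odd cycle of length ≥ 5 has girth 3. -/
theorem girth_eq_three_of_selfTwoDist {V : Type*} [Fintype V] (G : SimpleGraph V)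
    (hconn : G.Connected) (hcard : 1 < Fintype.card V)
    (hself : Nonempty (twoDistGraph G ≃g G))
    (hcyc : ∀ n : ℕ, 5 ≤ n → Odd n → IsEmpty (G ≃g cycleGraph n)) :
    G.girth = 3 := by
  classical
  obtain ⟨φ⟩ := hself
  -- It suffices to find a triangle.
  suffices htri : ∃ x y z : V, G.Adj x y ∧ G.Adj y z ∧ G.Adj z x by
    obtain ⟨x, y, z, hxy, hyz, hzx⟩ := htri
    have hxz : x ≠ z := hzx.ne'
    have hxy' : x ≠ y := hxy.ne
    have hyz' : y ≠ z := hyz.ne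
    let w : G.Walk x x := .cons hxy (.cons hyz (.cons hzx .nil))
    have hw : w.IsCycle := by
      rw [Walk.isCycle_def, Walk.isTrail_def]
      refine ⟨?_, by simp [w], ?_⟩
      · simp [w, Walk.edges_cons, Sym2.eq_iff]
        aesop
      · simp [w, Walk.support_cons]
        aesop
    have hle : G.egirth ≤ 3 := by
      have : G.egirth ≤ (w.length : ℕ∞) :=
        iInf_le_of_le x (iInf_le_of_le w (iInf_le_of_le hw le_rfl))
      simpa [w] using this
    have hge : (3 : ℕ∞) ≤ G.egirth := three_le_egirth
    have : G.egirth = 3 := le_antisymm hle hge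
    simp [girth, this]
  by_contra h3
  push_neg at h3
  -- h3 : ∀ x y z, Adj x y → Adj y z → ¬ Adj z x
  -- Step A: no vertex has three distinct neighbors.
  have hdist2 : ∀ x y v : V, G.Adj v x → G.Adj v y → x ≠ y → G.dist x y = 2 := by
    intro x y v hvx hvy hxy
    have h2 : G.dist x y ≤ 2 := by
      have := SimpleGraph.dist_le (Walk.cons hvx.symm (Walk.cons hvy Walk.nil))
      simpa using this
    have h0 : G.dist x y ≠ 0 := fun h0 => hxy (hconn.dist_eq_zero_iff.mp h0)
    have h1 : G.dist x y ≠ 1 := fun h1 =>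
      h3 x y v (SimpleGraph.dist_eq_one_iff_adj.mp h1) hvy.symm hvx
    omega
  have hdeg : ∀ v a b c : V, G.Adj v a → G.Adj v b → G.Adj v c →
      a ≠ b → a ≠ c → b ≠ c → False := by
    intro v a b c hva hvb hvc hab hac hbc
    have t1 : (twoDistGraph G).Adj a b := hdist2 a b v hva hvb hab
    have t2 : (twoDistGraph G).Adj b c := hdist2 b c v hvb hvc hbc
    have t3 : (twoDistGraph G).Adj c a := hdist2 c a v hvc hva (Ne.symm hac)
    exact h3 (φ a) (φ b) (φ c) (φ.map_adj_iff.mpr t1) (φ.map_adj_iff.mpr t2)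
      (φ.map_adj_iff.mpr t3)
  -- an edge exists
  have hedge : ∃ x y : V, G.Adj x y := by
    obtain ⟨u, v, huv⟩ := Fintype.exists_pair_of_one_lt_card hcard
    obtain ⟨wuv⟩ := hconn u v
    cases wuv with
    | nil => exact absurd rfl huv
    | cons h _ => exact ⟨_, _, h⟩
  -- Step B: G admits no proper 2-coloring
  have hnc : ∀ c : V → Bool, (∀ {x y : V}, G.Adj x y → c x ≠ c y) → False := by
    intro c hc
    have h2c : ∀ {x y : V} (w : (twoDistGraph G).Walk x y), c x = c y := by
      intro x y w
      induction w with
      | nil => rfl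
      | cons h q ih =>
        rename_i a b d
        have hd2 : G.dist a b = 2 := h
        obtain ⟨p, hp⟩ := SimpleGraph.exists_walk_of_dist_ne_zero (by rw [hd2]; omega)
        have : c a = c b := (color_walk_parity c hc p).mpr (by rw [hp, hd2]; exact ⟨1, rfl⟩)
        exact this.trans ih
    have hG2conn : (twoDistGraph G).Connected := φ.connected_iff.mpr hconn
    obtain ⟨x, y, hxy⟩ := hedge
    obtain ⟨w2⟩ := hG2conn x y
    exact hc hxy (h2c w2)
  -- Step C: take a maximum-length path
  obtain ⟨v0⟩ := hconn.nonempty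
  let S : Set ℕ := {k | ∃ (x y : V) (q : G.Walk x y), q.IsPath ∧ q.length = k}
  have hSne : S.Nonempty := ⟨0, v0, v0, Walk.nil, by simp, rfl⟩
  have hSbdd : BddAbove S := by
    refine ⟨Fintype.card V, ?_⟩
    rintro k ⟨x, y, q, hq, rfl⟩
    exact hq.length_lt.le
  obtain ⟨a, b, p, hp, hpl⟩ := Nat.sSup_mem hSne hSbdd
  have hmax : ∀ {x y : V} (q : G.Walk x y), q.IsPath → q.length ≤ p.length := by
    intro x y q hq
    rw [hpl]
    exact le_csSup hSbdd ⟨_, _, q, hq, rfl⟩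
  -- the support of p is closed under adjacency
  have hclose : ∀ u w : V, u ∈ p.support → G.Adj u w → w ∈ p.support := by
    intro u w hu huw
    by_contra hw
    obtain ⟨k, hk, hkle⟩ := Walk.mem_support_iff_exists_getVert.mp hu
    rcases Nat.eq_zero_or_pos k with rfl | hk0
    · have hua : u = a := by rw [← hk, Walk.getVert_zero]
      have hq : (Walk.cons (hua ▸ huw.symm) p).IsPath := hp.cons hw
      have := hmax _ hq
      simp [Walk.length_cons] at this
    · rcases eq_or_lt_of_le hkle with hkL | hkL
      · have hub : u = b := by rw [← hk, hkL, Walk.getVert_length]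
        have hbr : w ∉ p.reverse.support := by
          rwa [Walk.support_reverse, List.mem_reverse]
        have hq : (Walk.cons (hub ▸ huw.symm) p.reverse).IsPath := hp.reverse.cons hbr
        have := hmax _ hq
        simp [Walk.length_cons, Walk.length_reverse] at this
      · have h1 : G.Adj u (p.getVert (k-1)) := by
          have := p.adj_getVert_succ (i := k-1) (by omega)
          rw [show k - 1 + 1 = k by omega, hk] at this
          exact this.symm
        have h2 : G.Adj u (p.getVert (k+1)) := by
          have := p.adj_getVert_succ (i := k) hkL
          rwa [hk] at this
        have m1 : p.getVert (k-1) ∈ p.support :=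
          Walk.mem_support_iff_exists_getVert.mpr ⟨k-1, rfl, by omega⟩
        have m2 : p.getVert (k+1) ∈ p.support :=
          Walk.mem_support_iff_exists_getVert.mpr ⟨k+1, rfl, by omega⟩
        have hne : p.getVert (k-1) ≠ p.getVert (k+1) := by
          intro he
          have := getVert_inj p hp (k-1) (k+1) (by omega) (by omega) he
          omega
        exact hdeg u (p.getVert (k-1)) (p.getVert (k+1)) w h1 h2 huw hne
          (fun he => hw (he ▸ m1)) (fun he => hw (he ▸ m2))
  -- p is a Hamiltonian path
  have hcover : ∀ x : V, x ∈ p.support := by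
    have key : ∀ {y z : V} (q : G.Walk y z), y ∈ p.support → z ∈ p.support := by
      intro y z q
      induction q with
      | nil => exact id
      | cons h q ih => intro hy; exact ih (hclose _ _ hy h)
    intro x
    obtain ⟨q⟩ := hconn a x
    exact key q p.start_mem_support
  have hlen : p.length + 1 = Fintype.card V := by
    have h1 : p.support.toFinset = Finset.univ := by
      ext x; simp [hcover x]
    have h2 : p.support.toFinset.card = p.support.length :=
      List.toFinset_card_of_nodup hp.support_nodup
    rw [h1, Finset.card_univ] at h2
    rw [Walk.length_support] at h2
    omega
  -- key adjacency characterization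
  have hkey : ∀ i j : ℕ, i < j → j ≤ p.length → G.Adj (p.getVert i) (p.getVert j) →
      j = i + 1 ∨ (i = 0 ∧ j = p.length) := by
    intro i j hij hjL hadj
    by_contra hcon
    push_neg at hcon
    obtain ⟨hne1, hne2⟩ := hcon
    have hij1 : i + 1 < j := by omega
    have inj := getVert_inj p hp
    rcases Nat.eq_zero_or_pos i with rfl | hi0
    · have hjL' : j < p.length := by
        rcases lt_or_eq_of_le hjL with h | h
        · exact h
        · exact absurd h (hne2 rfl)
      have h1 : G.Adj (p.getVert j) (p.getVert (j-1)) := by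
        have := p.adj_getVert_succ (i := j-1) (by omega)
        rw [show j - 1 + 1 = j by omega] at this
        exact this.symm
      have h2 : G.Adj (p.getVert j) (p.getVert (j+1)) := p.adj_getVert_succ hjL'
      exact hdeg (p.getVert j) (p.getVert (j-1)) (p.getVert (j+1)) (p.getVert 0)
        h1 h2 hadj.symm
        (fun he => by have := inj _ _ (by omega) (by omega) he; omega)
        (fun he => by have := inj _ _ (by omega) (by omega) he; omega)
        (fun he => by have := inj _ _ (by omega) (by omega) he; omega)
    · have h1 : G.Adj (p.getVert i) (p.getVert (i-1)) := by
        have := p.adj_getVert_succ (i := i-1) (by omega)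
        rw [show i - 1 + 1 = i by omega] at this
        exact this.symm
      have h2 : G.Adj (p.getVert i) (p.getVert (i+1)) := p.adj_getVert_succ (by omega)
      exact hdeg (p.getVert i) (p.getVert (i-1)) (p.getVert (i+1)) (p.getVert j)
        h1 h2 hadj
        (fun he => by have := inj _ _ (by omega) (by omega) he; omega)
        (fun he => by have := inj _ _ (by omega) (by omega) he; omega)
        (fun he => by have := inj _ _ (by omega) (by omega) he; omega)
  set n := Fintype.card V with hn
  have hn2 : 2 ≤ n := hcard
  let f : Fin n → V := fun i => p.getVert i.val
  have hfinj : Function.Injective f := by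
    intro i j hij
    exact Fin.ext (getVert_inj p hp i.val j.val (by omega) (by omega) hij)
  have hfbij : Function.Bijective f :=
    (Fintype.bijective_iff_injective_and_card f).mpr ⟨hfinj, by rw [Fintype.card_fin]⟩
  have ha0 : p.getVert 0 = a := Walk.getVert_zero p
  have hbL : p.getVert p.length = b := Walk.getVert_length p
  by_cases hab : G.Adj a b
  · -- cycle case
    have hadj0L : G.Adj (p.getVert 0) (p.getVert p.length) := by
      rw [ha0, hbL]; exact hab
    have hsub : ∀ i j : Fin n, (i - j).val = 1 → G.Adj (p.getVert j.val) (p.getVert i.val) := by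
      intro i j h
      simp only [Fin.sub_def] at h
      have hi := i.isLt; have hj := j.isLt
      rcases lt_or_ge (n - j.val + i.val) n with hv | hv
      · rw [Nat.mod_eq_of_lt hv] at h
        have hi0 : (i : ℕ) = 0 := by omega
        have hjL : (j : ℕ) = p.length := by omega
        rw [hi0, hjL]
        exact hadj0L.symm
      · rw [Nat.mod_eq_sub_mod hv, Nat.mod_eq_of_lt (by omega)] at h
        have hij : (i : ℕ) = (j : ℕ) + 1 := by omega
        rw [hij]
        exact p.adj_getVert_succ (by omega)
    let ψ : cycleGraph n ≃g G :=
      { toEquiv := Equiv.ofBijective f hfbij,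
        map_rel_iff' := by
          intro i j
          simp only [Equiv.ofBijective_apply]
          rw [cycleGraph_adj']
          constructor
          · intro hadj
            have hi := i.isLt; have hj := j.isLt
            rcases lt_trichotomy (i : ℕ) (j : ℕ) with h | h | h
            · rcases hkey i.val j.val h (by omega) hadj with h' | h'
              · right
                simp only [Fin.sub_def]
                rw [show n - (i : ℕ) + (j : ℕ) = n + 1 by omega, Nat.add_mod_left]
                exact Nat.mod_eq_of_lt (by omega)
              · left
                simp only [Fin.sub_def]
                rw [show n - (j : ℕ) + (i : ℕ) = 1 by omega]
                exact Nat.mod_eq_of_lt (by omega)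
            · exact absurd ((Fin.ext h : i = j) ▸ hadj) (G.irrefl)
            · rcases hkey j.val i.val h (by omega) hadj.symm with h' | h'
              · left
                simp only [Fin.sub_def]
                rw [show n - (j : ℕ) + (i : ℕ) = n + 1 by omega, Nat.add_mod_left]
                exact Nat.mod_eq_of_lt (by omega)
              · right
                simp only [Fin.sub_def]
                rw [show n - (i : ℕ) + (j : ℕ) = 1 by omega]
                exact Nat.mod_eq_of_lt (by omega)
          · rintro (h | h)
            · exact (hsub i j h).symm
            · exact hsub j i h }
    rcases Nat.even_or_odd n with hev | hodd
    · -- even cycle: 2-colorable, contradiction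
      obtain ⟨m, hm⟩ := hev
      have hc : ∀ {x y : V}, G.Adj x y →
          (decide ((ψ.symm x).val % 2 = 1)) ≠ (decide ((ψ.symm y).val % 2 = 1)) := by
        intro x y hxy
        have hadj : (cycleGraph n).Adj (ψ.symm x) (ψ.symm y) := ψ.symm.map_adj_iff.mpr hxy
        rw [cycleGraph_adj'] at hadj
        have key : ∀ c d : Fin n, (c - d).val = 1 → (c : ℕ) % 2 ≠ (d : ℕ) % 2 := by
          intro c d h
          simp only [Fin.sub_def] at h
          have hc' := c.isLt; have hd' := d.isLt
          rcases lt_or_ge (n - (d : ℕ) + (c : ℕ)) n with hv | hv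
          · rw [Nat.mod_eq_of_lt hv] at h
            omega
          · rw [Nat.mod_eq_sub_mod hv, Nat.mod_eq_of_lt (by omega)] at h
            omega
        simp only [ne_eq, decide_eq_decide]
        rcases hadj with h | h
        · have := key _ _ h; omega
        · have := key _ _ h; omega
      exact hnc _ hc
    · -- odd cycle
      have hn35 : n = 3 ∨ 5 ≤ n := by
        rcases hodd with ⟨m, hm⟩; omega
      rcases hn35 with h3' | h5
      · -- triangle, contradiction with h3
        have hL2 : p.length = 2 := by omega
        exact h3 (p.getVert 0) (p.getVert 1) (p.getVert 2)
          (p.adj_getVert_succ (by omega))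
          (by
            have := p.adj_getVert_succ (i := 1) (by omega)
            simpa using this)
          (by
            have := hadj0L.symm
            rwa [hL2] at this)
      · exact (hcyc n h5 hodd).false ψ.symm
  · -- path case: 2-colorable, contradiction
    let ψ : pathGraph n ≃g G :=
      { toEquiv := Equiv.ofBijective f hfbij,
        map_rel_iff' := by
          intro i j
          simp only [Equiv.ofBijective_apply]
          rw [pathGraph_adj]
          constructor
          · intro hadj
            have hi := i.isLt; have hj := j.isLt
            rcases lt_trichotomy (i : ℕ) (j : ℕ) with h | h | h
            · rcases hkey i.val j.val h (by omega) hadj with h' | h'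
              · left; omega
              · exfalso
                apply hab
                have : G.Adj (p.getVert (i : ℕ)) (p.getVert (j : ℕ)) := hadj
                rwa [h'.1, h'.2, ha0, hbL] at this
            · exact absurd ((Fin.ext h : i = j) ▸ hadj) (G.irrefl)
            · rcases hkey j.val i.val h (by omega) hadj.symm with h' | h'
              · right; omega
              · exfalso
                apply hab
                have : G.Adj (p.getVert (j : ℕ)) (p.getVert (i : ℕ)) := hadj.symm
                rwa [h'.1, h'.2, ha0, hbL] at this
          · rintro (h | h)
            · have := p.adj_getVert_succ (i := (i : ℕ)) (by omega)
              rwa [h] at this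
            · have := p.adj_getVert_succ (i := (j : ℕ)) (by omega)
              rw [h] at this
              exact this.symm }
    have hc : ∀ {x y : V}, G.Adj x y →
        pathGraph.bicoloring n (ψ.symm x) ≠ pathGraph.bicoloring n (ψ.symm y) := by
      intro x y hxy
      exact (pathGraph.bicoloring n).valid (ψ.symm.map_adj_iff.mpr hxy)
    exact hnc _ hc
end

section
/- Let Γ be a finite connected self 2-distance graph with at least two vertices, having no 4-cycle subgraph, and not isomorphic to the cycle graph Cₙ for any odd n ≥ 5. Then the maximum degree of Γ equals 3. -/
open SimpleGraph

section AuxLemmas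

variable {V : Type*} {G : SimpleGraph V}

lemma hasNCycle4 {a b c d : V} (hab : G.Adj a b) (hbc : G.Adj b c)
    (hcd : G.Adj c d) (hda : G.Adj d a) (hac : a ≠ c) (hbd : b ≠ d) :
    HasNCycle G 4 := by
  have h1 := hab.ne
  have h2 := hbc.ne
  have h3 := hcd.ne
  have h4 := hda.ne.symm
  refine ⟨![a,b,c,d], ?_, ?_⟩
  · intro i j hij
    fin_cases i <;> fin_cases j <;> simp_all <;> rfl
  · intro i
    fin_cases i <;> simpa using by first | exact hab | exact hbc | exact hcd | exact hda

lemma twoDist_adj {v x y : V} (hx : G.Adj v x) (hy : G.Adj v y) (hxy : x ≠ y)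
    (hn : ¬ G.Adj x y) : (twoDistGraph G).Adj x y := by
  show G.dist x y = 2
  have hle : G.dist x y ≤ 2 := by
    have := SimpleGraph.dist_le (Walk.cons hx.symm (Walk.cons hy Walk.nil))
    simpa using this
  have h0 : G.dist x y ≠ 0 := by
    intro h
    have hr : G.Reachable x y := ⟨Walk.cons hx.symm (Walk.cons hy Walk.nil)⟩
    exact hxy ((SimpleGraph.Reachable.dist_eq_zero_iff hr).mp h)
  have h1 : G.dist x y ≠ 1 := fun h => hn (SimpleGraph.dist_eq_one_iff_adj.mp h)
  omega

lemma twoAdjC4 {v x y z : V} (hvx : G.Adj v x) (hvy : G.Adj v y) (hvz : G.Adj v z)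
    (hyz : y ≠ z) (hxy : G.Adj x y) (hxz : G.Adj x z) : HasNCycle G 4 :=
  hasNCycle4 hvy hxy.symm hxz hvz.symm hvx.ne hyz

lemma exists_four {α : Type*} [DecidableEq α] {s : Finset α} (h : 4 ≤ s.card) :
    ∃ a b c d, a ∈ s ∧ b ∈ s ∧ c ∈ s ∧ d ∈ s ∧ a ≠ b ∧ a ≠ c ∧ a ≠ d ∧ b ≠ c ∧ b ≠ d ∧ c ≠ d := by
  obtain ⟨a, ha⟩ := (Finset.card_pos (s := s)).mp (by omega)
  have h1 : 3 ≤ (s.erase a).card := by rw [Finset.card_erase_of_mem ha]; omega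
  obtain ⟨b, hb⟩ := (Finset.card_pos (s := s.erase a)).mp (by omega)
  have h2 : 2 ≤ ((s.erase a).erase b).card := by
    rw [Finset.card_erase_of_mem hb]; omega
  obtain ⟨c, hc⟩ := (Finset.card_pos (s := (s.erase a).erase b)).mp (by omega)
  have h3 : 1 ≤ (((s.erase a).erase b).erase c).card := by
    rw [Finset.card_erase_of_mem hc]; omega
  obtain ⟨d, hd⟩ := (Finset.card_pos (s := ((s.erase a).erase b).erase c)).mp (by omega)
  simp only [Finset.mem_erase] at hb hc hd
  exact ⟨a, b, c, d, ha, hb.2, hc.2.2, hd.2.2.2, hb.1.symm, hc.2.1.symm,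
    hd.2.2.1.symm, hc.1.symm, hd.2.1.symm, hd.1.symm⟩

lemma degree_le_three [Fintype V] [DecidableRel G.Adj]
    (h4 : ¬ HasNCycle G 4) (h42 : ¬ HasNCycle (twoDistGraph G) 4) (v : V) :
    G.degree v ≤ 3 := by
  by_contra hdeg
  push_neg at hdeg
  classical
  obtain ⟨a, b, c, d, ha, hb, hc, hd, nab, nac, nad, nbc, nbd, ncd⟩ :=
    exists_four (s := G.neighborFinset v) (by rw [G.card_neighborFinset_eq_degree]; omega)
  rw [SimpleGraph.mem_neighborFinset] at ha hb hc hd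
  have two : ∀ {x y : V}, G.Adj v x → G.Adj v y → x ≠ y → ¬ G.Adj x y →
      (twoDistGraph G).Adj x y := fun hx hy hxy hn => twoDist_adj hx hy hxy hn
  by_cases hab : G.Adj a b
  · have nac2 : ¬ G.Adj a c := fun h => h4 (twoAdjC4 ha hb hc nbc hab h)
    have nad2 : ¬ G.Adj a d := fun h => h4 (twoAdjC4 ha hb hd nbd hab h)
    have nbc2 : ¬ G.Adj b c := fun h => h4 (twoAdjC4 hb ha hc nac hab.symm h)
    have nbd2 : ¬ G.Adj b d := fun h => h4 (twoAdjC4 hb ha hd nad hab.symm h)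
    exact h42 (hasNCycle4 (two ha hc nac nac2) (two hc hb nbc.symm (fun h => nbc2 h.symm))
      (two hb hd nbd nbd2) (two hd ha nad.symm (fun h => nad2 h.symm)) nab ncd)
  · by_cases hcd : G.Adj c d
    · have nca2 : ¬ G.Adj c a := fun h => h4 (twoAdjC4 hc hd ha nad.symm hcd h)
      have ncb2 : ¬ G.Adj c b := fun h => h4 (twoAdjC4 hc hd hb nbd.symm hcd h)
      have nda2 : ¬ G.Adj d a := fun h => h4 (twoAdjC4 hd hc ha nac.symm hcd.symm h)
      have ndb2 : ¬ G.Adj d b := fun h => h4 (twoAdjC4 hd hc hb nbc.symm hcd.symm h)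
      exact h42 (hasNCycle4 (two ha hc nac (fun h => nca2 h.symm))
        (two hc hb nbc.symm ncb2) (two hb hd nbd (fun h => ndb2 h.symm))
        (two hd ha nad.symm nda2) nab ncd)
    · by_cases hac : G.Adj a c
      · have nbc2 : ¬ G.Adj b c := fun h => h4 (twoAdjC4 hc ha hb nab hac.symm h.symm)
        have nad2 : ¬ G.Adj a d := fun h => h4 (twoAdjC4 ha hc hd ncd hac h)
        exact h42 (hasNCycle4 (two ha hb nab hab) (two hb hc nbc nbc2)
          (two hc hd ncd hcd) (two hd ha nad.symm (fun h => nad2 h.symm)) nac nbd)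
      · by_cases had : G.Adj a d
        · have nbd2 : ¬ G.Adj b d := fun h => h4 (twoAdjC4 hd ha hb nab had.symm h.symm)
          exact h42 (hasNCycle4 (two ha hc nac hac) (two hc hd ncd hcd)
            (two hd hb nbd.symm (fun h => nbd2 h.symm)) (two hb ha nab.symm (fun h => hab h.symm))
            nad nbc.symm)
        · by_cases hbc : G.Adj b c
          · have nbd2 : ¬ G.Adj b d := fun h => h4 (twoAdjC4 hb hc hd ncd hbc h)
            exact h42 (hasNCycle4 (two hb ha nab.symm (fun h => hab h.symm))
              (two ha hc nac hac) (two hc hd ncd hcd)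
              (two hd hb nbd.symm (fun h => nbd2 h.symm)) nbc nad)
          · exact h42 (hasNCycle4 (two ha hb nab hab) (two hb hc nbc hbc)
              (two hc hd ncd hcd) (two hd ha nad.symm (fun h => had h.symm)) nac nbd)

lemma path_getVert_inj {u v : V} {p : G.Walk u v} (hp : p.IsPath) :
    ∀ i ≤ p.length, ∀ j ≤ p.length, p.getVert i = p.getVert j → i = j := by
  induction p with
  | nil => intro i hi j hj _; simp at hi hj; omega
  | cons h q ih =>
    rw [Walk.cons_isPath_iff] at hp
    intro i hi j hj heq
    rw [Walk.length_cons] at hi hj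
    match i, j with
    | 0, 0 => rfl
    | 0, j+1 =>
      exfalso
      apply hp.2
      rw [Walk.getVert_zero, Walk.getVert_cons_succ] at heq
      exact Walk.mem_support_iff_exists_getVert.mpr ⟨j, heq.symm, by omega⟩
    | i+1, 0 =>
      exfalso
      apply hp.2
      rw [Walk.getVert_zero, Walk.getVert_cons_succ] at heq
      exact Walk.mem_support_iff_exists_getVert.mpr ⟨i, heq, by omega⟩
    | i+1, j+1 =>
      rw [Walk.getVert_cons_succ, Walk.getVert_cons_succ] at heq
      have := ih hp.1 i (by omega) j (by omega) heq
      omega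

lemma cross {u v : V} (p : G.Walk u v) :
    ∀ {x y : V} (q : G.Walk x y), x ∉ p.support → y ∈ p.support →
    ∃ a b, G.Adj a b ∧ a ∉ p.support ∧ b ∈ p.support := by
  intro x y q
  induction q with
  | nil => exact fun hx hy => absurd hy hx
  | @cons a b c h q ih =>
    intro hx hy
    by_cases hb : b ∈ p.support
    · exact ⟨a, b, h, hx, hb⟩
    · exact ih hb hy

lemma three_le_degree [Fintype V] [DecidableRel G.Adj] {x a b c : V}
    (h1 : G.Adj x a) (h2 : G.Adj x b) (h3 : G.Adj x c)
    (nab : a ≠ b) (nac : a ≠ c) (nbc : b ≠ c) : 3 ≤ G.degree x := by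
  classical
  rw [← SimpleGraph.card_neighborFinset_eq_degree]
  have hsub : ({a, b, c} : Finset V) ⊆ G.neighborFinset x := by
    intro w hw
    simp only [Finset.mem_insert, Finset.mem_singleton] at hw
    rcases hw with rfl | rfl | rfl <;> rwa [SimpleGraph.mem_neighborFinset]
  have hcard : ({a, b, c} : Finset V).card = 3 := by
    rw [Finset.card_insert_of_notMem (by simp [nab, nac]),
      Finset.card_insert_of_notMem (by simp [nbc]), Finset.card_singleton]
  calc 3 = ({a, b, c} : Finset V).card := hcard.symm
    _ ≤ _ := Finset.card_le_card hsub

lemma exists_adj [Fintype V] {H : SimpleGraph V} (hconn : H.Connected)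
    (hcard : 1 < Fintype.card V) : ∃ x y, H.Adj x y := by
  obtain ⟨x, y, hxy⟩ := Fintype.exists_pair_of_one_lt_card hcard
  obtain ⟨w⟩ := hconn x y
  cases w with
  | nil => exact absurd rfl hxy
  | cons h _ => exact ⟨_, _, h⟩

lemma no2col_aux {x y : V} (hconn : G.Connected) (h : (twoDistGraph G).Adj x y) :
    ∃ m, G.Adj x m ∧ G.Adj m y := by
  have h2 : G.dist x y = 2 := h
  obtain ⟨w, hw⟩ := hconn.exists_walk_length_eq_dist x y
  rw [h2] at hw
  cases w with
  | nil => simp at hw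
  | cons h1 w' =>
    cases w' with
    | nil => simp at hw
    | cons h2' w'' =>
      cases w'' with
      | nil => exact ⟨_, h1, h2'⟩
      | cons h3 w3 => simp [Walk.length_cons] at hw

lemma no2col [Fintype V] (hconn : G.Connected) (hcard : 1 < Fintype.card V)
    (hconn2 : (twoDistGraph G).Connected) (c : V → Bool)
    (hc : ∀ x y, G.Adj x y → c x ≠ c y) : False := by
  have key : ∀ x y, (twoDistGraph G).Adj x y → c x = c y := by
    intro x y hxy
    obtain ⟨m, h1, h2⟩ := no2col_aux hconn hxy
    have e1 := hc x m h1
    have e2 := hc m y h2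
    cases hx : c x <;> cases hm : c m <;> cases hy : c y <;> simp_all
  have pres : ∀ x y, (twoDistGraph G).Reachable x y → c x = c y := by
    intro x y hr
    obtain ⟨w⟩ := hr
    induction w with
    | nil => rfl
    | cons h w ih => exact (key _ _ h).trans ih
  obtain ⟨x, y, hxy⟩ := exists_adj hconn hcard
  exact hc x y hxy (pres x y (hconn2 x y))

lemma iso_of_cyclic {n : ℕ} (hn : 3 ≤ n) (g : ℕ → V)
    (hinj : ∀ i ≤ n-1, ∀ j ≤ n-1, g i = g j → i = j)
    (hsurj : ∀ w, ∃ i, i ≤ n-1 ∧ g i = w)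
    (hadj : ∀ i ≤ n-1, ∀ j ≤ n-1, (G.Adj (g i) (g j) ↔
      j = i + 1 ∨ i = j + 1 ∨ (i = 0 ∧ j = n-1) ∨ (i = n-1 ∧ j = 0))) :
    Nonempty (cycleGraph n ≃g G) := by
  obtain ⟨m, rfl⟩ : ∃ m, n = m + 2 := ⟨n - 2, by omega⟩
  set f : Fin (m+2) → V := fun i => g i.val with hfdef
  have hbij : Function.Bijective f := by
    constructor
    · intro i j hij
      exact Fin.ext (hinj i.val (by omega) j.val (by omega) hij)
    · intro w
      obtain ⟨i, hi, hgi⟩ := hsurj w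
      exact ⟨⟨i, by omega⟩, hgi⟩
  have hsucc : ∀ x : Fin (m+2), (x + 1).val = if x.val = m+1 then 0 else x.val + 1 := by
    intro x
    rcases Nat.lt_or_ge x.val (m+1) with h | h
    · rw [if_neg (by omega), Fin.val_add, Fin.val_one, Nat.mod_eq_of_lt (by omega)]
    · have hx : x.val = m+1 := by have := x.isLt; omega
      rw [if_pos hx, Fin.val_add, Fin.val_one, hx]
      show (m + 1 + 1) % (m + 2) = 0
      have h2 : m + 1 + 1 = m + 2 := rfl
      rw [h2, Nat.mod_self]
  refine ⟨{ toEquiv := Equiv.ofBijective f hbij, map_rel_iff' := ?_ }⟩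
  intro i j
  simp only [Equiv.ofBijective_apply]
  show G.Adj (f i) (f j) ↔ _
  have t1 : ((i : Fin (m+2)) - j = 1) ↔ i = j + 1 := by rw [sub_eq_iff_eq_add, add_comm j 1]
  have t2 : ((j : Fin (m+2)) - i = 1) ↔ j = i + 1 := by rw [sub_eq_iff_eq_add, add_comm i 1]
  rw [hfdef]
  show G.Adj (g i.val) (g j.val) ↔ _
  rw [hadj i.val (by omega) j.val (by omega), cycleGraph_adj, t1, t2,
    Fin.ext_iff, Fin.ext_iff, hsucc i, hsucc j]
  have hi := i.isLt
  have hj := j.isLt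
  split_ifs <;> omega

lemma partB [Fintype V] [DecidableRel G.Adj] (hconn : G.Connected)
    (hcard : 1 < Fintype.card V) (hconn2 : (twoDistGraph G).Connected)
    (hcyc : ∀ n : ℕ, 5 ≤ n → Odd n → IsEmpty (G ≃g cycleGraph n))
    (hd : ∀ w : V, G.degree w ≤ 2) : False := by
  classical
  set P : Set ℕ := {l | ∃ (u v : V) (p : G.Walk u v), p.IsPath ∧ p.length = l} with hPdef
  have hne : P.Nonempty := by
    obtain ⟨x⟩ := hconn.nonempty
    exact ⟨0, x, x, Walk.nil, Walk.IsPath.nil, rfl⟩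
  have hbdd : BddAbove P := by
    refine ⟨Fintype.card V, ?_⟩
    rintro l ⟨a, b, q, hq, rfl⟩
    exact hq.length_lt.le
  obtain ⟨u, v, p, hp, hk⟩ := Nat.sSup_mem hne hbdd
  set k := sSup P with hkdef
  have hmax : ∀ (a b : V) (q : G.Walk a b), q.IsPath → q.length ≤ k :=
    fun a b q hq => le_csSup hbdd ⟨a, b, q, hq, rfl⟩
  have hinj := path_getVert_inj hp
  rw [hk] at hinj
  -- every vertex lies on p
  have hsupp : ∀ w, w ∈ p.support := by
    by_contra hw
    push_neg at hw
    obtain ⟨w, hw⟩ := hw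
    obtain ⟨q⟩ := hconn w u
    obtain ⟨a, b, hab, ha, hb⟩ := cross p q hw p.start_mem_support
    obtain ⟨i, hgi, hi⟩ := Walk.mem_support_iff_exists_getVert.mp hb
    rw [hk] at hi
    by_cases hb0 : b = u
    · subst hb0
      have hext : (Walk.cons hab p).IsPath := (Walk.cons_isPath_iff _ _).mpr ⟨hp, ha⟩
      have := hmax _ _ _ hext
      rw [Walk.length_cons, hk] at this
      omega
    · by_cases hbk : b = v
      · subst hbk
        have ha' : a ∉ p.reverse.support := by
          rwa [Walk.support_reverse, List.mem_reverse]
        have hext : (Walk.cons hab p.reverse).IsPath :=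
          (Walk.cons_isPath_iff _ _).mpr ⟨hp.reverse, ha'⟩
        have := hmax _ _ _ hext
        rw [Walk.length_cons, Walk.length_reverse, hk] at this
        omega
      · have hi0 : i ≠ 0 := by
          intro h
          rw [h, Walk.getVert_zero] at hgi
          exact hb0 hgi.symm
        have hik : i ≠ k := by
          intro h
          rw [h, ← hk, Walk.getVert_length] at hgi
          exact hbk hgi.symm
        have h1 : G.Adj b (p.getVert (i-1)) := by
          have := p.adj_getVert_succ (i := i - 1) (by omega)
          rw [Nat.sub_add_cancel (by omega)] at this
          rw [← hgi]
          exact this.symm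
        have h2 : G.Adj b (p.getVert (i+1)) := by
          rw [← hgi]
          exact p.adj_getVert_succ (by omega)
        have hmem1 : p.getVert (i-1) ∈ p.support :=
          Walk.mem_support_iff_exists_getVert.mpr ⟨i-1, rfl, by omega⟩
        have hmem2 : p.getVert (i+1) ∈ p.support :=
          Walk.mem_support_iff_exists_getVert.mpr ⟨i+1, rfl, by omega⟩
        have hne12 : p.getVert (i-1) ≠ p.getVert (i+1) := by
          intro h
          have := hinj (i-1) (by omega) (i+1) (by omega) h
          omega
        have hna1 : a ≠ p.getVert (i-1) := fun h => ha (h ▸ hmem1)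
        have hna2 : a ≠ p.getVert (i+1) := fun h => ha (h ▸ hmem2)
        have := three_le_degree hab.symm h1 h2 hna1 hna2 hne12
        have := hd b
        omega
  -- |V| = k + 1
  have hlen : k + 1 = Fintype.card V := by
    have h1 : p.support.toFinset = Finset.univ :=
      Finset.eq_univ_iff_forall.mpr fun w => List.mem_toFinset.mpr (hsupp w)
    have h2 := List.toFinset_card_of_nodup hp.support_nodup
    rw [h1, Finset.card_univ, Walk.length_support, hk] at h2
    omega
  have hk1 : 1 ≤ k := by omega
  -- neighbours of interior vertices
  have nbhd : ∀ i, 0 < i → i < k → ∀ j ≤ k,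
      G.Adj (p.getVert i) (p.getVert j) → j = i + 1 ∨ j = i - 1 := by
    intro i h0 hik j hj hadj
    by_contra hcon
    push_neg at hcon
    have h1 : G.Adj (p.getVert i) (p.getVert (i-1)) := by
      have := p.adj_getVert_succ (i := i - 1) (by omega)
      rw [Nat.sub_add_cancel (by omega)] at this
      exact this.symm
    have h2 : G.Adj (p.getVert i) (p.getVert (i+1)) := p.adj_getVert_succ (by omega)
    have hj1 : p.getVert j ≠ p.getVert (i+1) := by
      intro h
      have := hinj j (by omega) (i+1) (by omega) h
      omega
    have hj2 : p.getVert j ≠ p.getVert (i-1) := by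
      intro h
      have := hinj j (by omega) (i-1) (by omega) h
      omega
    have hne12 : p.getVert (i+1) ≠ p.getVert (i-1) := by
      intro h
      have := hinj (i+1) (by omega) (i-1) (by omega) h
      omega
    have := three_le_degree hadj h2 h1 hj1 hj2 hne12
    have := hd (p.getVert i)
    omega
  have adj_index : ∀ i ≤ k, ∀ j ≤ k, G.Adj (p.getVert i) (p.getVert j) →
      j = i + 1 ∨ i = j + 1 ∨ (i = 0 ∧ j = k) ∨ (i = k ∧ j = 0) := by
    intro i hi j hj hadj
    have hij : i ≠ j := by
      intro h
      subst h
      exact G.loopless.irrefl _ hadj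
    by_cases h0i : 0 < i ∧ i < k
    · rcases nbhd i h0i.1 h0i.2 j hj hadj with h | h <;> omega
    · by_cases h0j : 0 < j ∧ j < k
      · rcases nbhd j h0j.1 h0j.2 i hi hadj.symm with h | h <;> omega
      · omega
  -- index of a vertex
  have index_exists : ∀ w : V, ∃ i, i ≤ k ∧ p.getVert i = w := by
    intro w
    obtain ⟨i, hgi, hi⟩ := Walk.mem_support_iff_exists_getVert.mp (hsupp w)
    exact ⟨i, by omega, hgi⟩
  have hu0 : p.getVert 0 = u := p.getVert_zero
  have hvk : p.getVert k = v := by rw [← hk]; exact p.getVert_length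
  -- parity coloring
  set c : V → Bool := fun w => decide (∃ i, i ≤ k ∧ p.getVert i = w ∧ i % 2 = 1) with hcdef
  have cval : ∀ i ≤ k, (c (p.getVert i) = true ↔ i % 2 = 1) := by
    intro i hi
    simp only [hcdef, decide_eq_true_eq]
    constructor
    · rintro ⟨i', hi', heq, hodd⟩
      rwa [hinj i' hi' i hi heq] at hodd
    · exact fun h => ⟨i, hi, rfl, h⟩
  have nowrap_col : (¬ G.Adj u v ∨ k % 2 = 1) → False := by
    intro hcase
    apply no2col hconn hcard hconn2 c
    intro x y hxy hcc
    obtain ⟨i, hi, rfl⟩ := index_exists x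
    obtain ⟨j, hj, rfl⟩ := index_exists y
    have hrel := adj_index i hi j hj hxy
    have hb : (c (p.getVert i) = true) ↔ (c (p.getVert j) = true) := by rw [hcc]
    rw [cval i hi, cval j hj] at hb
    rcases hrel with h | h | ⟨h1, h2⟩ | ⟨h1, h2⟩
    · omega
    · omega
    · rcases hcase with hno | hk2
      · subst h1; subst h2
        rw [hu0, hvk] at hxy
        exact hno hxy
      · omega
    · rcases hcase with hno | hk2
      · subst h1; subst h2
        rw [hu0, hvk] at hxy
        exact hno hxy.symm
      · omega
  by_cases huv : G.Adj u v
  · by_cases hkodd : k % 2 = 1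
    · exact nowrap_col (Or.inr hkodd)
    · by_cases hk2 : k = 2
      · -- triangle case : every pair of distinct vertices is adjacent
        obtain ⟨x, y, hxy⟩ := exists_adj hconn2 hcard
        have hxyne : x ≠ y := hxy.ne
        have hadj01 : G.Adj (p.getVert 0) (p.getVert 1) := p.adj_getVert_succ (by omega)
        have hadj12 : G.Adj (p.getVert 1) (p.getVert 2) := p.adj_getVert_succ (by omega)
        have hadj02 : G.Adj (p.getVert 0) (p.getVert 2) := by
          rw [hu0, show (2:ℕ) = k from hk2.symm, hvk]
          exact huv
        have hadjall : G.Adj x y := by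
          obtain ⟨i, hi, rfl⟩ := index_exists x
          obtain ⟨j, hj, rfl⟩ := index_exists y
          have hij : i ≠ j := fun h => hxyne (by rw [h])
          rw [hk2] at hi hj
          interval_cases i <;> interval_cases j <;>
            first
              | exact absurd rfl hij
              | exact hadj01 | exact hadj12 | exact hadj02
              | exact hadj01.symm | exact hadj12.symm | exact hadj02.symm
        have h2' : G.dist x y = 2 := hxy
        have h1' : G.dist x y = 1 := SimpleGraph.dist_eq_one_iff_adj.mpr hadjall
        omega
      · -- odd cycle of length ≥ 5
        have hk4 : 4 ≤ k := by omega
        have hadjiff : ∀ i ≤ k, ∀ j ≤ k, (G.Adj (p.getVert i) (p.getVert j) ↔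
            j = i + 1 ∨ i = j + 1 ∨ (i = 0 ∧ j = k) ∨ (i = k ∧ j = 0)) := by
          intro i hi j hj
          constructor
          · exact adj_index i hi j hj
          · rintro (rfl | rfl | ⟨rfl, rfl⟩ | ⟨rfl, rfl⟩)
            · exact p.adj_getVert_succ (by omega)
            · exact (p.adj_getVert_succ (by omega)).symm
            · rw [hu0, hvk]; exact huv
            · rw [hu0, hvk]; exact huv.symm
        have hiso := iso_of_cyclic (G := G) (n := k + 1) (by omega) p.getVert
          (by simpa using hinj) (by simpa using index_exists) (by simpa using hadjiff)
        obtain ⟨ψ⟩ := hiso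
        have hodd : Odd (k+1) := Nat.odd_iff.mpr (by omega)
        exact (hcyc (k+1) (by omega) hodd).false ψ.symm
  · exact nowrap_col (Or.inl huv)

end AuxLemmas

lemma hasNCycle_map {V : Type*} {G H : SimpleGraph V} (e : G ≃g H) {n : ℕ}
    (h : HasNCycle G n) : HasNCycle H n := by
  obtain ⟨v, hinj, hadj⟩ := h
  exact ⟨e ∘ v, e.toEquiv.injective.comp hinj, fun i => e.map_adj_iff.mpr (hadj i)⟩

/-- A connected self 2-distance graph with no 4-cycle subgraph which is not an
odd cycle of length ≥ 5 has maximum degree 3. -/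
theorem maxDegree_eq_three_of_c4Free {V : Type*} [Fintype V] (G : SimpleGraph V)
    [DecidableRel G.Adj]
    (hconn : G.Connected) (hcard : 1 < Fintype.card V)
    (hself : Nonempty (twoDistGraph G ≃g G))
    (h4 : ¬ HasNCycle G 4)
    (hcyc : ∀ n : ℕ, 5 ≤ n → Odd n → IsEmpty (G ≃g cycleGraph n)) :
    G.maxDegree = 3 := by
  obtain ⟨e⟩ := hself
  have hconn2 : (twoDistGraph G).Connected := e.connected_iff.mpr hconn
  have h42 : ¬ HasNCycle (twoDistGraph G) 4 := fun h => h4 (hasNCycle_map e h)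
  have hle : ∀ v, G.degree v ≤ 3 := degree_le_three h4 h42
  have hnot : ¬ ∀ w : V, G.degree w ≤ 2 :=
    fun hdlt => partB hconn hcard hconn2 hcyc hdlt
  push_neg at hnot
  obtain ⟨w, hw⟩ := hnot
  have h3w : G.degree w = 3 := le_antisymm (hle w) (by omega)
  exact le_antisymm (G.maxDegree_le_of_forall_degree_le 3 hle)
    (h3w ▸ G.degree_le_maxDegree w)
end

section
/- Let Γ be a finite connected self 2-distance graph with at least two vertices, having no 4-cycle subgraph, and not isomorphic to the cycle graph Cₙ for any odd n ≥ 5. If Γ has a 5-cycle subgraph, then Γ is isomorphic to C₅|C₃. -/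
open SimpleGraph

namespace C5proof
variable {V : Type*} {G : SimpleGraph V}

lemma dist2 {a b c : V} (h1 : G.Adj a c) (h2 : G.Adj c b) (hna : ¬ G.Adj a b) (hne : a ≠ b) :
    G.dist a b = 2 := by
  have hle : G.dist a b ≤ 2 := by
    simpa using G.dist_le (Walk.cons h1 (Walk.cons h2 Walk.nil))
  have h0 : G.dist a b ≠ 0 := by
    rw [SimpleGraph.dist_ne_zero_iff_ne_and_reachable]
    exact ⟨hne, ⟨Walk.cons h1 (Walk.cons h2 Walk.nil)⟩⟩
  have h1' : G.dist a b ≠ 1 := fun h => hna (SimpleGraph.dist_eq_one_iff_adj.mp h)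
  omega

lemma dist2_ne {a b : V} (h : G.dist a b = 2) : a ≠ b := by
  rintro rfl; simp [SimpleGraph.dist_self] at h

lemma mk4 {a x b y : V} (h1 : G.Adj a x) (h2 : G.Adj x b) (h3 : G.Adj b y) (h4 : G.Adj y a)
    (hab : a ≠ b) (hxy : x ≠ y) : HasNCycle G 4 := by
  refine ⟨![a,x,b,y], ?_, ?_⟩
  · have hax := h1.ne; have hxb := h2.ne; have hby := h3.ne; have hya := h4.ne
    intro i j hij
    fin_cases i <;> fin_cases j <;> simp_all <;> rfl
  · intro i
    fin_cases i <;> simp <;> assumption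

variable (hG4 : ¬ HasNCycle G 4) (φ : twoDistGraph G ≃g G)

include hG4 in
lemma no4 {a x b y : V} (h1 : G.Adj a x) (h2 : G.Adj x b) (h3 : G.Adj b y) (h4 : G.Adj y a)
    (hab : a ≠ b) (hxy : x ≠ y) : False := hG4 (mk4 h1 h2 h3 h4 hab hxy)

lemma phi_adj {a b : V} (h : G.dist a b = 2) : G.Adj (φ a) (φ b) :=
  φ.map_rel_iff.mpr h

include hG4 φ in
lemma no4two {a x b y : V} (h1 : G.dist a x = 2) (h2 : G.dist x b = 2) (h3 : G.dist b y = 2)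
    (h4 : G.dist y a = 2) (hab : a ≠ b) (hxy : x ≠ y) : False :=
  no4 hG4 (phi_adj φ h1) (phi_adj φ h2) (phi_adj φ h3) (phi_adj φ h4)
    (fun h => hab (φ.toEquiv.injective h)) (fun h => hxy (φ.toEquiv.injective h))

/-- a pentagon structure -/
def IsPent (G : SimpleGraph V) (p : ZMod 5 → V) : Prop :=
  Function.Injective p ∧ ∀ i, G.Adj (p i) (p (i + 1))

namespace IsPent
variable {p : ZMod 5 → V} (hp : IsPent G p)

include hp

lemma rot (k : ZMod 5) : IsPent G (fun i => p (i + k)) := by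
  refine ⟨fun i j h => by simpa using hp.1 h, fun i => ?_⟩
  have : i + k + 1 = i + 1 + k := by ring
  simpa [this] using hp.2 (i + k)

lemma rev : IsPent G (fun i => p (-i)) := by
  refine ⟨fun i j h => by simpa using hp.1 h, fun i => ?_⟩
  have h := (hp.2 (-(i+1))).symm
  have : -(i+1) + 1 = -i := by ring
  rwa [this] at h

lemma ne (i j : ZMod 5) (h : i ≠ j) : p i ≠ p j := fun hh => h (hp.1 hh)

lemma adj (i j : ZMod 5) (h : j = i + 1) : G.Adj (p i) (p j) := h ▸ hp.2 i

lemma nochord (hG4 : ¬ HasNCycle G 4) (i : ZMod 5) : ¬ G.Adj (p i) (p (i + 2)) := by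
  intro hc
  have h13 : i ≠ i + 3 := fun h => absurd (left_eq_add.mp h) (by decide)
  have h24 : i + 2 ≠ i + 4 := by
    intro h; rw [show i + 2 = i + 2 + 0 by ring, show i + 4 = i + 2 + 2 by ring] at h
    exact absurd (add_right_injective (i+2) h) (by decide)
  exact no4 hG4 hc (hp.adj (i+2) (i+3) (by ring)) (hp.adj (i+3) (i+4) (by ring))
    (hp.adj (i+4) i (by rw [add_assoc, show ((4:ZMod 5)+1) = 0 by decide, add_zero]))
    (hp.ne i (i+3) h13) (hp.ne (i+2) (i+4) h24)

lemma pdist (hG4 : ¬ HasNCycle G 4) (i : ZMod 5) : G.dist (p i) (p (i + 2)) = 2 :=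
  dist2 (hp.2 i) (hp.adj (i+1) (i+2) (by ring)) (hp.nochord hG4 i)
    (hp.ne i (i+2) (fun h => absurd (left_eq_add.mp h) (by decide)))

end IsPent

include hG4 φ in
lemma pentPhi {p : ZMod 5 → V} (hp : IsPent G p) : IsPent G (fun i => φ (p (2*i))) := by
  refine ⟨fun i j h => ?_, fun i => ?_⟩
  · have h2 : (2:ZMod 5)*i = 2*j := hp.1 (φ.toEquiv.injective h)
    have h3 := congrArg (fun t => (3:ZMod 5)*t) h2
    simpa [show ∀ t : ZMod 5, 3*(2*t) = t from fun t => by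
      rw [← mul_assoc, show (3:ZMod 5)*2 = 1 by decide, one_mul]] using h3
  · have := phi_adj φ (hp.pdist hG4 (2*i))
    have e : (2:ZMod 5)*i + 2 = 2*(i+1) := by ring
    rwa [e] at this

include hG4 in
lemma tri_exact {p : ZMod 5 → V} (hp : IsPent G p) {a : V}
    (h0 : G.Adj a (p 0)) (h1 : G.Adj a (p 1)) (hna : ∀ i, a ≠ p i) :
    ¬G.Adj a (p 2) ∧ ¬G.Adj a (p 3) ∧ ¬G.Adj a (p 4) := by
  refine ⟨fun hc => ?_, fun hc => ?_, fun hc => ?_⟩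
  · exact no4 hG4 h0.symm hc (hp.adj 1 2 (by decide)).symm (hp.adj 0 1 (by decide)).symm
      (hp.ne 0 2 (by decide)) (fun h => hna 1 h)
  · exact no4 hG4 h0 (hp.adj 4 0 (by decide)).symm (hp.adj 3 4 (by decide)).symm hc.symm
      (hna 4) (hp.ne 0 3 (by decide))
  · exact no4 hG4 h1 (hp.adj 0 1 (by decide)).symm (hp.adj 4 0 (by decide)).symm hc.symm
      (hna 0) (hp.ne 1 4 (by decide))

include hG4 φ in
/-- pentagon with two triangles on adjacent edges (sharing q 2) is impossible -/
lemma adjEdgeKill {q : ZMod 5 → V} (hq : IsPent G q) {a b : V}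
    (ha1 : G.Adj a (q 1)) (ha2 : G.Adj a (q 2)) (hb2 : G.Adj b (q 2)) (hb3 : G.Adj b (q 3))
    (hna : ∀ i, a ≠ q i) (hnb : ∀ i, b ≠ q i) (hab : a ≠ b) : False := by
  have hA := tri_exact hG4 (hq.rot 1) (a := a) ha1 ha2 (fun i => hna (i+1))
  have hB := tri_exact hG4 (hq.rot 2) (a := b) hb2 hb3 (fun i => hnb (i+2))
  -- hA : ¬a~q3 ∧ ¬a~q4 ∧ ¬a~q0 ; hB : ¬b~q4 ∧ ¬b~q0 ∧ ¬b~q1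
  have hnab : ¬ G.Adj a b := fun h =>
    no4 hG4 h hb3 (hq.adj 2 3 (by decide)).symm ha2.symm (hna 3) (hnb 2)
  have dab : G.dist a b = 2 := dist2 ha2 hb2.symm hnab hab
  have dbq1 : G.dist b (q 1) = 2 := dist2 hb2 (hq.adj 1 2 (by decide)).symm hB.2.2 (hnb 1)
  have dq1q3 : G.dist (q 1) (q 3) = 2 := hq.pdist hG4 1
  have dq3a : G.dist (q 3) a = 2 := by
    rw [SimpleGraph.dist_comm]
    exact dist2 ha2 (hq.adj 2 3 (by decide)) hA.1 (hna 3)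
  exact no4two hG4 φ dab dbq1 dq1q3 dq3a (hna 1) (hnb 3)

include hG4 φ in
/-- pentagon with two triangles on "opposite" edges (p0p1 and p2p3) is impossible -/
lemma oppEdgeKill {p : ZMod 5 → V} (hp : IsPent G p) {a b : V}
    (ha0 : G.Adj a (p 0)) (ha1 : G.Adj a (p 1)) (hb2 : G.Adj b (p 2)) (hb3 : G.Adj b (p 3))
    (hna : ∀ i, a ≠ p i) (hnb : ∀ i, b ≠ p i) (hab : a ≠ b) : False := by
  have hA := tri_exact hG4 hp ha0 ha1 hna
  have hB := tri_exact hG4 (hp.rot 2) (a := b) hb2 hb3 (fun i => hnb (i+2))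
  -- hB : ¬b~p4 ∧ ¬b~p0 ∧ ¬b~p1
  have hnab : ¬ G.Adj a b := fun h =>
    no4 hG4 h hb2 (hp.adj 1 2 (by decide)).symm ha1.symm (hna 2) (hnb 1)
  have da2 : G.dist a (p 2) = 2 := dist2 ha1 (hp.adj 1 2 (by decide)) hA.1 (hna 2)
  have da4 : G.dist a (p 4) = 2 := dist2 ha0 (hp.adj 4 0 (by decide)).symm hA.2.2 (hna 4)
  have db4 : G.dist b (p 4) = 2 := dist2 hb3 (hp.adj 3 4 (by decide)) hB.1 (hnb 4)
  have db1 : G.dist b (p 1) = 2 := dist2 hb2 (hp.adj 1 2 (by decide)).symm hB.2.2 (hnb 1)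
  have hq := pentPhi hG4 φ hp
  exact adjEdgeKill hG4 φ hq (phi_adj φ da2) (phi_adj φ da4) (phi_adj φ db4) (phi_adj φ db1)
    (fun i h => hna (2*i) (φ.toEquiv.injective h))
    (fun i h => hnb (2*i) (φ.toEquiv.injective h))
    (fun h => hab (φ.toEquiv.injective h))


include hG4 φ in
/-- no vertex outside the pentagon+triangle configuration is adjacent to it -/
lemma killNbr {p : ZMod 5 → V} (hp : IsPent G p) {a x : V}
    (ha0 : G.Adj a (p 0)) (ha1 : G.Adj a (p 1)) (hna : ∀ i, a ≠ p i)
    (hnx : ∀ i, x ≠ p i) (hxa : x ≠ a)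
    (hadj : G.Adj x a ∨ ∃ i, G.Adj x (p i)) : False := by
  have hax : a ≠ x := hxa.symm
  have hA := tri_exact hG4 hp ha0 ha1 hna
  have da2 : G.dist a (p 2) = 2 := dist2 ha1 (hp.adj 1 2 (by decide)) hA.1 (hna 2)
  have da4 : G.dist a (p 4) = 2 := dist2 ha0 (hp.adj 4 0 (by decide)).symm hA.2.2 (hna 4)
  by_cases hxa' : G.Adj x a
  · by_cases h0 : G.Adj x (p 0)
    · exact no4 hG4 hxa' ha1 (hp.adj 0 1 (by decide)).symm h0.symm (hnx 1) (hna 0)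
    by_cases h1 : G.Adj x (p 1)
    · exact no4 hG4 hxa' ha0 (hp.adj 0 1 (by decide)) h1.symm (hnx 0) (hna 1)
    by_cases h2 : G.Adj x (p 2)
    · exact no4 hG4 hxa' ha1 (hp.adj 1 2 (by decide)) h2.symm (hnx 1) (hna 2)
    by_cases h4 : G.Adj x (p 4)
    · exact no4 hG4 hxa' ha0 (hp.adj 4 0 (by decide)).symm h4.symm (hnx 0) (hna 4)
    by_cases h3 : G.Adj x (p 3)
    · refine no4two hG4 φ (dist2 hxa' ha1 h1 (hnx 1)) ?_ ?_ ?_ (hnx 4) (hp.ne 1 2 (by decide))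
      · rw [SimpleGraph.dist_comm]; exact hp.pdist hG4 4
      · rw [SimpleGraph.dist_comm]; exact hp.pdist hG4 2
      · rw [SimpleGraph.dist_comm]
        exact dist2 h3 (hp.adj 2 3 (by decide)).symm h2 (hnx 2)
    · refine no4two hG4 φ (dist2 hxa' ha0 h0 (hnx 0)) ?_ ?_ ?_ (hnx 3) (hp.ne 0 1 (by decide))
      · rw [SimpleGraph.dist_comm]; exact hp.pdist hG4 3
      · rw [SimpleGraph.dist_comm]; exact hp.pdist hG4 1
      · rw [SimpleGraph.dist_comm]
        exact dist2 hxa' ha1 h1 (hnx 1)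
  · have hnax : ¬ G.Adj a x := fun h => hxa' h.symm
    obtain ⟨i, hi⟩ := hadj.resolve_left hxa'
    by_cases h0 : G.Adj x (p 0)
    · by_cases h1 : G.Adj x (p 1)
      · exact no4 hG4 ha0.symm ha1 h1.symm h0 (hp.ne 0 1 (by decide)) hax
      by_cases h4 : G.Adj x (p 4)
      · refine no4two hG4 φ (dist2 ha0 h0.symm hnax hax) (dist2 h0 (hp.adj 0 1 (by decide)) h1 (hnx 1)) ?_ ?_ (hna 1) (hnx 4)
        · rw [SimpleGraph.dist_comm]; exact hp.pdist hG4 4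
        · rw [SimpleGraph.dist_comm]; exact da4
      by_cases h2 : G.Adj x (p 2)
      · exact no4 hG4 h0 (hp.adj 0 1 (by decide)) (hp.adj 1 2 (by decide)) h2.symm (hnx 1) (hp.ne 0 2 (by decide))
      by_cases h3 : G.Adj x (p 3)
      · exact no4 hG4 h0 (hp.adj 4 0 (by decide)).symm (hp.adj 3 4 (by decide)).symm h3.symm (hnx 4) (hp.ne 0 3 (by decide))
      · refine no4two hG4 φ (dist2 h0 (hp.adj 0 1 (by decide)) h1 (hnx 1)) ?_ ?_ (dist2 ha0 h0.symm hnax hax) (hnx 4) ((hna 1).symm)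
        · rw [SimpleGraph.dist_comm]; exact hp.pdist hG4 4
        · rw [SimpleGraph.dist_comm]; exact da4
    by_cases h1 : G.Adj x (p 1)
    · by_cases h2 : G.Adj x (p 2)
      · refine no4two hG4 φ (dist2 ha1 h1.symm hnax hax) (dist2 h1 (hp.adj 0 1 (by decide)).symm h0 (hnx 0)) (hp.pdist hG4 0) ?_ (hna 0) (hnx 2)
        rw [SimpleGraph.dist_comm]; exact da2
      by_cases h3 : G.Adj x (p 3)
      · exact no4 hG4 h1 (hp.adj 1 2 (by decide)) (hp.adj 2 3 (by decide)) h3.symm (hnx 2) (hp.ne 1 3 (by decide))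
      by_cases h4 : G.Adj x (p 4)
      · exact no4 hG4 h1 (hp.adj 0 1 (by decide)).symm (hp.adj 4 0 (by decide)).symm h4.symm (hnx 0) (hp.ne 1 4 (by decide))
      · refine no4two hG4 φ (dist2 h1 (hp.adj 0 1 (by decide)).symm h0 (hnx 0)) (hp.pdist hG4 0) ?_ (dist2 ha1 h1.symm hnax hax) (hnx 2) ((hna 0).symm)
        rw [SimpleGraph.dist_comm]; exact da2
    by_cases h2 : G.Adj x (p 2)
    · by_cases h3 : G.Adj x (p 3)
      · exact oppEdgeKill hG4 φ hp ha0 ha1 h2 h3 hna hnx hax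
      by_cases h4 : G.Adj x (p 4)
      · exact no4 hG4 h2 (hp.adj 2 3 (by decide)) (hp.adj 3 4 (by decide)) h4.symm (hnx 3) (hp.ne 2 4 (by decide))
      · -- x adjacent to p 2 only : transfer through φ
        have dxp1 : G.dist x (p 1) = 2 := dist2 h2 (hp.adj 1 2 (by decide)).symm h1 (hnx 1)
        have dxp3 : G.dist x (p 3) = 2 := dist2 h2 (hp.adj 2 3 (by decide)) h3 (hnx 3)
        have hq := pentPhi hG4 φ hp
        exact oppEdgeKill hG4 φ (hq.rot 1) (phi_adj φ da2) (phi_adj φ da4)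
          (phi_adj φ dxp1) (phi_adj φ dxp3)
          (fun i h => hna _ (φ.toEquiv.injective h))
          (fun i h => hnx _ (φ.toEquiv.injective h))
          (fun h => hax (φ.toEquiv.injective h))
    by_cases h3 : G.Adj x (p 3)
    · by_cases h4 : G.Adj x (p 4)
      · exact oppEdgeKill hG4 φ ((hp.rev).rot 4) ha1 ha0 h4 h3
          (fun i => hna _) (fun i => hnx _) hax
      · refine no4two hG4 φ da2 ?_ (dist2 h3 (hp.adj 3 4 (by decide)) h4 (hnx 4)) ?_ hax (hp.ne 2 4 (by decide))
        · rw [SimpleGraph.dist_comm]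
          exact dist2 h3 (hp.adj 2 3 (by decide)).symm h2 (hnx 2)
        · rw [SimpleGraph.dist_comm]; exact da4
    by_cases h4 : G.Adj x (p 4)
    · -- x adjacent to p 4 only : transfer through φ
      have dxp3 : G.dist x (p 3) = 2 := dist2 h4 (hp.adj 3 4 (by decide)).symm h3 (hnx 3)
      have dxp0 : G.dist x (p 0) = 2 := dist2 h4 (hp.adj 4 0 (by decide)) h0 (hnx 0)
      have hq := pentPhi hG4 φ hp
      exact oppEdgeKill hG4 φ ((hq.rev).rot 3) (phi_adj φ da4) (phi_adj φ da2)
        (phi_adj φ dxp0) (phi_adj φ dxp3)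
        (fun i h => hna _ (φ.toEquiv.injective h))
        (fun i h => hnx _ (φ.toEquiv.injective h))
        (fun h => hax (φ.toEquiv.injective h))
    · have : ∀ j : ZMod 5, j = 0 ∨ j = 1 ∨ j = 2 ∨ j = 3 ∨ j = 4 := by decide
      rcases this i with rfl | rfl | rfl | rfl | rfl
      exacts [h0 hi, h1 hi, h2 hi, h3 hi, h4 hi]


lemma exists_boundary {S : Set V} : ∀ {u w : V}, G.Walk u w → u ∈ S → w ∉ S →
    ∃ s x, s ∈ S ∧ x ∉ S ∧ G.Adj s x := by
  intro u w W
  induction W with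
  | nil => intro h h'; exact absurd h h'
  | @cons u c w h W ih =>
    intro hu hw
    by_cases hc : c ∈ S
    · exact ih hc hw
    · exact ⟨u, c, hu, hc, h⟩

set_option maxHeartbeats 2000000 in
include hG4 φ in
lemma buildIso (hconn : G.Connected) {p : ZMod 5 → V} (hp : IsPent G p) {a : V}
    (ha0 : G.Adj a (p 0)) (ha1 : G.Adj a (p 1)) (hna : ∀ i, a ≠ p i) :
    Nonempty (G ≃g C5C3) := by
  classical
  have hA := tri_exact hG4 hp ha0 ha1 hna
  have hzmod : ∀ j : ZMod 5, j = 0 ∨ j = 1 ∨ j = 2 ∨ j = 3 ∨ j = 4 := by decide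
  -- every vertex is in the configuration
  have hcover : ∀ y : V, y = a ∨ ∃ i, y = p i := by
    by_contra hc
    push_neg at hc
    obtain ⟨y, hya, hyp⟩ := hc
    have hy : y ∉ {v : V | v = a ∨ ∃ i, v = p i} := by
      intro h
      rcases h with h | ⟨i, h⟩
      · exact hya h
      · exact hyp i h
    obtain ⟨W⟩ := hconn (p 0) y
    obtain ⟨s, x, hs, hx, hsx⟩ := exists_boundary W (Or.inr ⟨0, rfl⟩) hy
    have hx' : (x ≠ a) ∧ ∀ i, x ≠ p i := by
      constructor
      · intro h; exact hx (Or.inl h)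
      · intro i h; exact hx (Or.inr ⟨i, h⟩)
    rcases hs with rfl | ⟨i, rfl⟩
    · exact killNbr hG4 φ hp ha0 ha1 hna hx'.2 hx'.1 (Or.inl hsx.symm)
    · exact killNbr hG4 φ hp ha0 ha1 hna hx'.2 hx'.1 (Or.inr ⟨i, hsx.symm⟩)
  -- the explicit bijection
  set f : Fin 6 → V := ![a, p 0, p 4, p 3, p 2, p 1] with hf
  have finj : Function.Injective f := by
    have d01 := hp.ne 0 1 (by decide); have d02 := hp.ne 0 2 (by decide)
    have d03 := hp.ne 0 3 (by decide); have d04 := hp.ne 0 4 (by decide)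
    have d12 := hp.ne 1 2 (by decide); have d13 := hp.ne 1 3 (by decide)
    have d14 := hp.ne 1 4 (by decide); have d23 := hp.ne 2 3 (by decide)
    have d24 := hp.ne 2 4 (by decide); have d34 := hp.ne 3 4 (by decide)
    have e0 := hna 0; have e1 := hna 1; have e2 := hna 2
    have e3 := hna 3; have e4 := hna 4
    intro i j h
    fin_cases i <;> fin_cases j <;>
      first
        | rfl
        | exact absurd h e0 | exact absurd h.symm e0
        | exact absurd h e1 | exact absurd h.symm e1
        | exact absurd h e2 | exact absurd h.symm e2
        | exact absurd h e3 | exact absurd h.symm e3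
        | exact absurd h e4 | exact absurd h.symm e4
        | exact absurd h d01 | exact absurd h.symm d01
        | exact absurd h d02 | exact absurd h.symm d02
        | exact absurd h d03 | exact absurd h.symm d03
        | exact absurd h d04 | exact absurd h.symm d04
        | exact absurd h d12 | exact absurd h.symm d12
        | exact absurd h d13 | exact absurd h.symm d13
        | exact absurd h d14 | exact absurd h.symm d14
        | exact absurd h d23 | exact absurd h.symm d23
        | exact absurd h d24 | exact absurd h.symm d24
        | exact absurd h d34 | exact absurd h.symm d34
  have fsurj : Function.Surjective f := by
    intro y
    rcases hcover y with rfl | ⟨i, rfl⟩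
    · exact ⟨0, rfl⟩
    · rcases hzmod i with rfl | rfl | rfl | rfl | rfl
      exacts [⟨1, rfl⟩, ⟨5, rfl⟩, ⟨4, rfl⟩, ⟨3, rfl⟩, ⟨2, rfl⟩]
  -- adjacency data
  have a01 : G.Adj (p 0) (p 1) := hp.adj 0 1 (by decide)
  have a12 : G.Adj (p 1) (p 2) := hp.adj 1 2 (by decide)
  have a23 : G.Adj (p 2) (p 3) := hp.adj 2 3 (by decide)
  have a34 : G.Adj (p 3) (p 4) := hp.adj 3 4 (by decide)
  have a40 : G.Adj (p 4) (p 0) := hp.adj 4 0 (by decide)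
  have n02 : ¬ G.Adj (p 0) (p 2) := hp.nochord hG4 0
  have n13 : ¬ G.Adj (p 1) (p 3) := hp.nochord hG4 1
  have n24 : ¬ G.Adj (p 2) (p 4) := hp.nochord hG4 2
  have n30 : ¬ G.Adj (p 3) (p 0) := hp.nochord hG4 3
  have n41 : ¬ G.Adj (p 4) (p 1) := hp.nochord hG4 4
  have na2 : ¬ G.Adj a (p 2) := hA.1
  have na3 : ¬ G.Adj a (p 3) := hA.2.1
  have na4 : ¬ G.Adj a (p 4) := hA.2.2
  refine ⟨(SimpleGraph.Iso.symm ⟨Equiv.ofBijective f ⟨finj, fsurj⟩, ?_⟩ : G ≃g C5C3)⟩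
  intro i j
  show G.Adj (f i) (f j) ↔ C5C3.Adj i j
  fin_cases i <;> fin_cases j <;>
    first
      | exact iff_of_false (G.irrefl) (by simp [C5C3, Sym2.eq_iff, Fin.ext_iff] <;> decide)
      | exact iff_of_true (by first
            | exact ha0 | exact ha1 | exact ha0.symm | exact ha1.symm
            | exact a01 | exact a12 | exact a23 | exact a34 | exact a40
            | exact a01.symm | exact a12.symm | exact a23.symm | exact a34.symm
            | exact a40.symm) (by simp [C5C3, Sym2.eq_iff, Fin.ext_iff] <;> decide)
      | exact iff_of_false (by first
            | exact na2 | exact na3 | exact na4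
            | exact fun h => na2 h.symm | exact fun h => na3 h.symm
            | exact fun h => na4 h.symm
            | exact n02 | exact n13 | exact n24 | exact n30 | exact n41
            | exact fun h => n02 h.symm | exact fun h => n13 h.symm
            | exact fun h => n24 h.symm | exact fun h => n30 h.symm
            | exact fun h => n41 h.symm) (by simp [C5C3, Sym2.eq_iff, Fin.ext_iff] <;> decide)


include hG4 in
lemma isoC5 {p : ZMod 5 → V} (hp : IsPent G p) (hall : ∀ y : V, ∃ i, y = p i) :
    Nonempty (G ≃g cycleGraph 5) := by
  classical
  have hzmod : ∀ j : ZMod 5, j = 0 ∨ j = 1 ∨ j = 2 ∨ j = 3 ∨ j = 4 := by decide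
  have d01 := hp.ne 0 1 (by decide); have d02 := hp.ne 0 2 (by decide)
  have d03 := hp.ne 0 3 (by decide); have d04 := hp.ne 0 4 (by decide)
  have d12 := hp.ne 1 2 (by decide); have d13 := hp.ne 1 3 (by decide)
  have d14 := hp.ne 1 4 (by decide); have d23 := hp.ne 2 3 (by decide)
  have d24 := hp.ne 2 4 (by decide); have d34 := hp.ne 3 4 (by decide)
  have a01 : G.Adj (p 0) (p 1) := hp.adj 0 1 (by decide)
  have a12 : G.Adj (p 1) (p 2) := hp.adj 1 2 (by decide)
  have a23 : G.Adj (p 2) (p 3) := hp.adj 2 3 (by decide)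
  have a34 : G.Adj (p 3) (p 4) := hp.adj 3 4 (by decide)
  have a40 : G.Adj (p 4) (p 0) := hp.adj 4 0 (by decide)
  have n02 : ¬ G.Adj (p 0) (p 2) := hp.nochord hG4 0
  have n13 : ¬ G.Adj (p 1) (p 3) := hp.nochord hG4 1
  have n24 : ¬ G.Adj (p 2) (p 4) := hp.nochord hG4 2
  have n30 : ¬ G.Adj (p 3) (p 0) := hp.nochord hG4 3
  have n41 : ¬ G.Adj (p 4) (p 1) := hp.nochord hG4 4
  set f : Fin 5 → V := ![p 0, p 1, p 2, p 3, p 4] with hf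
  have finj : Function.Injective f := by
    intro i j h
    fin_cases i <;> fin_cases j <;>
      first
        | rfl
        | exact absurd h d01 | exact absurd h.symm d01
        | exact absurd h d02 | exact absurd h.symm d02
        | exact absurd h d03 | exact absurd h.symm d03
        | exact absurd h d04 | exact absurd h.symm d04
        | exact absurd h d12 | exact absurd h.symm d12
        | exact absurd h d13 | exact absurd h.symm d13
        | exact absurd h d14 | exact absurd h.symm d14
        | exact absurd h d23 | exact absurd h.symm d23
        | exact absurd h d24 | exact absurd h.symm d24
        | exact absurd h d34 | exact absurd h.symm d34
  have fsurj : Function.Surjective f := by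
    intro y
    obtain ⟨i, rfl⟩ := hall y
    rcases hzmod i with rfl | rfl | rfl | rfl | rfl
    exacts [⟨0, rfl⟩, ⟨1, rfl⟩, ⟨2, rfl⟩, ⟨3, rfl⟩, ⟨4, rfl⟩]
  refine ⟨(SimpleGraph.Iso.symm ⟨Equiv.ofBijective f ⟨finj, fsurj⟩, ?_⟩ : G ≃g cycleGraph 5)⟩
  intro i j
  show G.Adj (f i) (f j) ↔ (cycleGraph 5).Adj i j
  fin_cases i <;> fin_cases j <;>
    first
      | exact iff_of_false (G.irrefl) (by decide)
      | exact iff_of_true (by first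
            | exact a01 | exact a12 | exact a23 | exact a34 | exact a40
            | exact a01.symm | exact a12.symm | exact a23.symm | exact a34.symm
            | exact a40.symm) (by decide)
      | exact iff_of_false (by first
            | exact n02 | exact n13 | exact n24 | exact n30 | exact n41
            | exact fun h => n02 h.symm | exact fun h => n13 h.symm
            | exact fun h => n24 h.symm | exact fun h => n30 h.symm
            | exact fun h => n41 h.symm) (by decide)

include hG4 φ in
lemma attach (hconn : G.Connected) {p : ZMod 5 → V} (hp : IsPent G p) {x : V}
    (hx0 : G.Adj x (p 0)) (hnx : ∀ i, x ≠ p i) : Nonempty (G ≃g C5C3) := by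
  by_cases h1 : G.Adj x (p 1)
  · exact buildIso hG4 φ hconn hp hx0 h1 hnx
  by_cases h4 : G.Adj x (p 4)
  · exact buildIso hG4 φ hconn (hp.rot 4) (a := x) h4 hx0 (fun i => hnx _)
  · have d1 : G.dist x (p 1) = 2 := dist2 hx0 (hp.adj 0 1 (by decide)) h1 (hnx 1)
    have d4 : G.dist x (p 4) = 2 := dist2 hx0 (hp.adj 4 0 (by decide)).symm h4 (hnx 4)
    have hq := pentPhi hG4 φ hp
    exact buildIso hG4 φ hconn (hq.rot 2) (a := φ x) (phi_adj φ d4) (phi_adj φ d1)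
      (fun i h => hnx _ (φ.toEquiv.injective h))

end C5proof

open C5proof

/-- A connected self 2-distance graph with no 4-cycle, not an odd cycle of
length ≥ 5, which has a 5-cycle subgraph, is isomorphic to C₅|C₃. -/
theorem iso_C5C3_of_c4Free_hasC5 {V : Type*} [Fintype V] (G : SimpleGraph V)
    (hconn : G.Connected) (hcard : 1 < Fintype.card V)
    (hself : Nonempty (twoDistGraph G ≃g G))
    (h4 : ¬ HasNCycle G 4)
    (hcyc : ∀ n : ℕ, 5 ≤ n → Odd n → IsEmpty (G ≃g cycleGraph n))
    (h5 : HasNCycle G 5) :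
    Nonempty (G ≃g C5C3) := by
  classical
  obtain ⟨φ⟩ := hself
  obtain ⟨v, hvinj, hvadj⟩ := h5
  have hp : IsPent G v := ⟨hvinj, hvadj⟩
  by_cases hall : ∀ y : V, ∃ i, y = v i
  · obtain ⟨iso⟩ := isoC5 h4 hp hall
    exact ((hcyc 5 (by norm_num) (by decide)).false iso).elim
  · push_neg at hall
    obtain ⟨y, hy⟩ := hall
    have hy' : y ∉ {w : V | ∃ i, w = v i} := by
      intro h; obtain ⟨i, h⟩ := h; exact hy i h
    obtain ⟨W⟩ := hconn (v 0) y
    obtain ⟨s, x, hs, hx, hsx⟩ := exists_boundary W (Set.mem_setOf.mpr ⟨0, rfl⟩) hy'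
    have hnx : ∀ i, x ≠ v i := fun i h => hx ⟨i, h⟩
    obtain ⟨i, rfl⟩ := hs
    have hzmod : ∀ j : ZMod 5, j = 0 ∨ j = 1 ∨ j = 2 ∨ j = 3 ∨ j = 4 := by decide
    rcases hzmod i with rfl | rfl | rfl | rfl | rfl
    · exact attach h4 φ hconn hp hsx.symm hnx
    · exact attach h4 φ hconn (hp.rot 1) (x := x) hsx.symm (fun j => hnx _)
    · exact attach h4 φ hconn (hp.rot 2) (x := x) hsx.symm (fun j => hnx _)
    · exact attach h4 φ hconn (hp.rot 3) (x := x) hsx.symm (fun j => hnx _)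
    · exact attach h4 φ hconn (hp.rot 4) (x := x) hsx.symm (fun j => hnx _)
end

section
/- Let Γ be a finite self 2-distance graph with no 4-cycle subgraph. Then the triangles of Γ are pairwise vertex-disjoint: any two distinct triangles of Γ have no vertex in common. -/
open SimpleGraph

lemma dist_eq_two' {V : Type*} {G : SimpleGraph V} {x y w : V} (hne : x ≠ y)
    (hnadj : ¬ G.Adj x y) (hxw : G.Adj x w) (hwy : G.Adj w y) : G.dist x y = 2 := by
  have hle : G.dist x y ≤ 2 := by
    have := SimpleGraph.dist_le (hxw.toWalk.append hwy.toWalk)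
    simpa using this
  interval_cases h : G.dist x y
  · exact absurd ((G.dist_eq_zero_iff_eq_or_not_reachable).mp h)
      (by push_neg; exact ⟨hne, ⟨hxw.toWalk.append hwy.toWalk⟩⟩)
  · exact absurd (dist_eq_one_iff_adj.mp h) hnadj
  · rfl

lemma hasC4 {V : Type*} {G : SimpleGraph V} {a b c d : V}
    (hab : G.Adj a b) (hbc : G.Adj b c) (hcd : G.Adj c d) (hda : G.Adj d a)
    (nac : a ≠ c) (nbd : b ≠ d) : HasNCycle G 4 := by
  have nab := hab.ne; have nbc := hbc.ne; have ncd := hcd.ne; have nda := hda.ne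
  refine ⟨![a,b,c,d], ?_, ?_⟩
  · intro i j h
    fin_cases i <;> fin_cases j <;> simp_all <;> rfl
  · intro i
    fin_cases i <;> simp_all <;> assumption

lemma clique3 {V : Type*} {G : SimpleGraph V} {s : Finset V} {v : V}
    (hs : G.IsNClique 3 s) (hv : v ∈ s) :
    ∃ a b, a ≠ b ∧ v ≠ a ∧ v ≠ b ∧ a ∈ s ∧ b ∈ s ∧
      (∀ w ∈ s, w = v ∨ w = a ∨ w = b) ∧
      G.Adj v a ∧ G.Adj v b ∧ G.Adj a b := by
  classical
  obtain ⟨x, y, z, hxy, hxz, hyz, hsx⟩ := Finset.card_eq_three.mp hs.card_eq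
  have hc := hs.isClique
  have mem : ∀ w, w ∈ s ↔ w = x ∨ w = y ∨ w = z := by
    intro w; rw [hsx]; simp
  have mx : x ∈ s := (mem x).mpr (by tauto)
  have my : y ∈ s := (mem y).mpr (by tauto)
  have mz : z ∈ s := (mem z).mpr (by tauto)
  rcases (mem v).mp hv with rfl | rfl | rfl
  · exact ⟨y, z, hyz, hxy, hxz, my, mz, fun w hw => (mem w).mp hw,
      hc mx my hxy, hc mx mz hxz, hc my mz hyz⟩
  · exact ⟨x, z, hxz, hxy.symm, hyz, mx, mz, fun w hw => by have := (mem w).mp hw; tauto,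
      hc my mx hxy.symm, hc my mz hyz, hc mx mz hxz⟩
  · exact ⟨x, y, hxy, hxz.symm, hyz.symm, mx, my, fun w hw => by have := (mem w).mp hw; tauto,
      hc mz mx hxz.symm, hc mz my hyz.symm, hc mx my hxy⟩

/-- In a self 2-distance graph with no 4-cycle subgraph, distinct triangles are
vertex-disjoint. -/
theorem triangles_disjoint_of_c4Free {V : Type*} [Fintype V] (G : SimpleGraph V)
    (hself : Nonempty (twoDistGraph G ≃g G))
    (h4 : ¬ HasNCycle G 4) :
    ∀ s t : Finset V, G.IsNClique 3 s → G.IsNClique 3 t → s ≠ t → Disjoint s t := by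
  intro s t hs ht hst
  by_contra hd
  obtain ⟨v, hvs, hvt⟩ := Finset.not_disjoint_iff.mp hd
  obtain ⟨a, b, nab, nva, nvb, has, hbs, hsmem, hva, hvb, hab⟩ := clique3 hs hvs
  obtain ⟨c, d, ncd, nvc, nvd, hct, hdt, htmem, hvc, hvd, hcd⟩ := clique3 ht hvt
  -- if some vertex of s other than v lies in t, the two triangles share an edge
  have shared_edge : ∀ p q r : V, v ≠ p → v ≠ q → p ≠ q → q ∈ s → q ∈ t →
      G.Adj v p → G.Adj v q → G.Adj p q → G.Adj q r → G.Adj v r → p ≠ r → False := by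
    intro p q r nvp nvq npq _ _ hvp hvq hpq hqr hvr npr
    -- 4-cycle p v r q
    exact h4 (hasC4 hvp.symm hvr hqr.symm hpq.symm npr nvq)
  -- rule out a second common vertex
  have hanot : a ∉ t := by
    intro hat
    rcases htmem a hat with h | rfl | rfl
    · exact nva h.symm
    · -- a = c : triangles share edge v-a, third vertices b and d
      have nbd : b ≠ d := by
        rintro rfl
        apply hst
        ext w
        constructor
        · intro hw; rcases hsmem w hw with rfl | rfl | rfl <;> assumption
        · intro hw; rcases htmem w hw with rfl | rfl | rfl <;> assumption
      exact shared_edge b a d nvb nva (Ne.symm nab) has hat hvb hva hab.symm hcd hvd nbd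
    · have nbc : b ≠ c := by
        rintro rfl
        apply hst
        ext w
        constructor
        · intro hw; rcases hsmem w hw with rfl | rfl | rfl <;> assumption
        · intro hw; rcases htmem w hw with rfl | rfl | rfl <;> assumption
      exact shared_edge b a c nvb nva (Ne.symm nab) has hat hvb hva hab.symm hcd.symm hvc nbc
  have hbnot : b ∉ t := by
    intro hbt
    rcases htmem b hbt with h | rfl | rfl
    · exact nvb h.symm
    · have nad : a ≠ d := by
        rintro rfl
        apply hst
        ext w
        constructor
        · intro hw; rcases hsmem w hw with rfl | rfl | rfl <;> assumption
        · intro hw; rcases htmem w hw with rfl | rfl | rfl <;> assumption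
      exact shared_edge a b d nva nvb nab hbs hbt hva hvb hab hcd hvd nad
    · have nac : a ≠ c := by
        rintro rfl
        apply hst
        ext w
        constructor
        · intro hw; rcases hsmem w hw with rfl | rfl | rfl <;> assumption
        · intro hw; rcases htmem w hw with rfl | rfl | rfl <;> assumption
      exact shared_edge a b c nva nvb nab hbs hbt hva hvb hab hcd.symm hvc nac
  have nac : a ≠ c := fun h => hanot (h ▸ hct)
  have nad : a ≠ d := fun h => hanot (h ▸ hdt)
  have nbc : b ≠ c := fun h => hbnot (h ▸ hct)
  have nbd : b ≠ d := fun h => hbnot (h ▸ hdt)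
  -- a cross edge between {a,b} and {c,d} gives a 4-cycle in G
  have hnac : ¬ G.Adj a c := fun h =>
    h4 (hasC4 hab.symm h hvc.symm hvb nbc nva.symm)
  have hnad : ¬ G.Adj a d := fun h =>
    h4 (hasC4 hab.symm h hvd.symm hvb nbd nva.symm)
  have hnbc : ¬ G.Adj b c := fun h =>
    h4 (hasC4 hab h hvc.symm hva nac nvb.symm)
  have hnbd : ¬ G.Adj b d := fun h =>
    h4 (hasC4 hab h hvd.symm hva nad nvb.symm)
  -- no cross edges: a c b d is a 4-cycle in the 2-distance graph
  have d1 : (twoDistGraph G).Adj a c := dist_eq_two' nac hnac hva.symm hvc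
  have d2 : (twoDistGraph G).Adj c b := dist_eq_two' (Ne.symm nbc)
    (fun h => hnbc h.symm) hvc.symm hvb
  have d3 : (twoDistGraph G).Adj b d := dist_eq_two' nbd hnbd hvb.symm hvd
  have d4 : (twoDistGraph G).Adj d a := dist_eq_two' (Ne.symm nad)
    (fun h => hnad h.symm) hvd.symm hva
  have hcyc : HasNCycle (twoDistGraph G) 4 := hasC4 d1 d2 d3 d4 nab ncd
  obtain ⟨φ⟩ := hself
  obtain ⟨w, winj, wadj⟩ := hcyc
  exact h4 ⟨φ ∘ w, φ.toEquiv.injective.comp winj, fun i => φ.map_rel_iff.mpr (wadj i)⟩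
end

section
/- Let Γ be a finite connected self 2-distance graph with at least two vertices whose triangles are pairwise vertex-disjoint, and which is not isomorphic to the cycle graph Cₙ for any odd n ≥ 5. Then the maximum degree of Γ equals 3. -/
open SimpleGraph

section Aux

variable {V : Type*} [Fintype V] [DecidableEq V] {G : SimpleGraph V} [DecidableRel G.Adj]

lemma zmod2_trans : ∀ a b c : ZMod 2, a ≠ b → b ≠ c → a = c := by decide

lemma zmod2_cast_ne {i j : ℕ} (h : i % 2 ≠ j % 2) : (i : ZMod 2) ≠ (j : ZMod 2) := by
  rw [← ZMod.natCast_mod i 2, ← ZMod.natCast_mod j 2]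
  rcases Nat.mod_two_eq_zero_or_one i with hi | hi <;>
    rcases Nat.mod_two_eq_zero_or_one j with hj | hj <;>
      simp_all

lemma dist_eq_two'_s12 {v x z : V} (hvx : G.Adj v x) (hvz : G.Adj v z) (hxz : x ≠ z)
    (hnadj : ¬ G.Adj x z) : G.dist x z = 2 := by
  have w : G.Walk x z := .cons hvx.symm (.cons hvz .nil)
  have h2 : G.dist x z ≤ 2 := SimpleGraph.dist_le (.cons hvx.symm (.cons hvz .nil))
  have h0 : G.dist x z ≠ 0 := by
    intro h
    rcases dist_eq_zero_iff_eq_or_not_reachable.mp h with h | h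
    · exact hxz h
    · exact h ⟨w⟩
  have h1 : G.dist x z ≠ 1 := fun h => hnadj (dist_eq_one_iff_adj.mp h)
  omega

lemma mem_of_closed {S : Set V} (hS : ∀ a ∈ S, ∀ b, G.Adj a b → b ∈ S) :
    ∀ {u v : V}, u ∈ S → G.Walk u v → v ∈ S := by
  intro u v hu w
  revert hu
  induction w with
  | nil => exact fun hu => hu
  | cons h p ih => exact fun hu => ih (hS _ hu _ h)

lemma adj_eq_of_two {v a b c : V} (hdeg : G.degree v ≤ 2) (ha : G.Adj v a) (hb : G.Adj v b)
    (hab : a ≠ b) (hc : G.Adj v c) : c = a ∨ c = b := by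
  have hsub : ({a, b} : Finset V) ⊆ G.neighborFinset v := by
    intro x hx
    rcases Finset.mem_insert.mp hx with rfl | hx
    · exact (G.mem_neighborFinset v x).mpr ha
    · rw [Finset.mem_singleton] at hx
      subst hx
      exact (G.mem_neighborFinset v x).mpr hb
  have heq : ({a, b} : Finset V) = G.neighborFinset v :=
    Finset.eq_of_subset_of_card_le hsub (by rwa [Finset.card_pair hab])
  have hmem : c ∈ ({a, b} : Finset V) := heq ▸ (G.mem_neighborFinset v c).mpr hc
  simpa using hmem

end Aux

section B
set_option linter.unusedSectionVars false

variable {V : Type*} [Fintype V] [DecidableEq V] {G : SimpleGraph V} [DecidableRel G.Adj]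

lemma twoDist_preconnected (hconn : G.Connected) (e : twoDistGraph G ≃g G) :
    (twoDistGraph G).Preconnected := by
  intro x y
  obtain ⟨w⟩ := hconn (e x) (e y)
  have : (twoDistGraph G).Reachable (e.symm (e x)) (e.symm (e y)) :=
    ⟨w.map (e.symm : G →g twoDistGraph G)⟩
  simpa using this

lemma color_eq_of_reachable (c : V → ZMod 2) (hc : ∀ x y, G.Adj x y → c x ≠ c y)
    {x y : V} (h : (twoDistGraph G).Reachable x y) : c x = c y := by
  obtain ⟨w⟩ := h
  induction w with
  | nil => rfl
  | @cons a b d h p ih =>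
    have h' : G.dist a b = 2 := h
    have hr : G.Reachable a b := SimpleGraph.Reachable.of_dist_ne_zero (by omega)
    obtain ⟨w2, hw2⟩ := hr.exists_walk_length_eq_dist
    rw [h'] at hw2
    have h1 : G.Adj (w2.getVert 0) (w2.getVert 1) := w2.adj_getVert_succ (by omega)
    have h2' : G.Adj (w2.getVert 1) (w2.getVert 2) := w2.adj_getVert_succ (by omega)
    rw [w2.getVert_zero] at h1
    rw [show (2 : ℕ) = w2.length from hw2.symm, w2.getVert_length] at h2'
    have e1 := hc _ _ h1
    have e2 := hc _ _ h2'
    exact (zmod2_trans _ _ _ e1 e2).trans ih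

lemma no_two_coloring (hconn : G.Connected) (hcard : 1 < Fintype.card V)
    (e : twoDistGraph G ≃g G) (c : V → ZMod 2)
    (hc : ∀ x y, G.Adj x y → c x ≠ c y) : False := by
  have hpre := twoDist_preconnected hconn e
  obtain ⟨x, y, hxy⟩ := Fintype.exists_pair_of_one_lt_card hcard
  obtain ⟨w⟩ := hconn x y
  have hlen : w.length ≠ 0 := fun h => hxy (SimpleGraph.Walk.eq_of_length_eq_zero h)
  have h1 : G.Adj (w.getVert 0) (w.getVert 1) := w.adj_getVert_succ (by omega)
  rw [w.getVert_zero] at h1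
  exact hc _ _ h1 (color_eq_of_reachable c hc (hpre x (w.getVert 1)))

end B

section C
set_option linter.unusedSectionVars false
variable {V : Type*} [Fintype V] [DecidableEq V] {G : SimpleGraph V} [DecidableRel G.Adj]

lemma deg_le_three
    (htri : ∀ s t : Finset V, G.IsNClique 3 s → G.IsNClique 3 t → s ≠ t → Disjoint s t)
    (e : twoDistGraph G ≃g G) (v : V) : G.degree v ≤ 3 := by
  by_contra hdeg
  push_neg at hdeg
  have hcard4 : 4 ≤ (G.neighborFinset v).card := hdeg
  -- the unique-edge property among neighbors of v
  have huniq : ∀ p q r s : V, G.Adj v p → G.Adj v q → G.Adj v r → G.Adj v s →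
      G.Adj p q → G.Adj r s → ({p, q} : Finset V) = {r, s} := by
    intro p q r s hp hq hr hs hpq hrs
    have h1 : G.IsNClique 3 {v, p, q} := SimpleGraph.is3Clique_triple_iff.mpr ⟨hp, hq, hpq⟩
    have h2 : G.IsNClique 3 {v, r, s} := SimpleGraph.is3Clique_triple_iff.mpr ⟨hr, hs, hrs⟩
    have heq : ({v, p, q} : Finset V) = {v, r, s} := by
      by_contra hne
      exact (Finset.disjoint_left.mp (htri _ _ h1 h2 hne)
        (show v ∈ ({v, p, q} : Finset V) by simp)) (by simp)
    have hvp : v ∉ ({p, q} : Finset V) := by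
      simp only [Finset.mem_insert, Finset.mem_singleton]
      push_neg
      exact ⟨fun h => G.irrefl (h ▸ hp), fun h => G.irrefl (h ▸ hq)⟩
    have hvr : v ∉ ({r, s} : Finset V) := by
      simp only [Finset.mem_insert, Finset.mem_singleton]
      push_neg
      exact ⟨fun h => G.irrefl (h ▸ hr), fun h => G.irrefl (h ▸ hs)⟩
    calc ({p, q} : Finset V) = ({v, p, q} : Finset V).erase v := (Finset.erase_insert hvp).symm
      _ = ({v, r, s} : Finset V).erase v := by rw [heq]
      _ = ({r, s} : Finset V) := Finset.erase_insert hvr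
  -- choose x ≠ y neighbors of v capturing all edges
  have hmain : ∃ x y : V, x ≠ y ∧ G.Adj v x ∧ G.Adj v y ∧
      ∀ p q, G.Adj v p → G.Adj v q → G.Adj p q → ({p, q} : Finset V) = {x, y} := by
    rcases Classical.em (∃ p q, G.Adj v p ∧ G.Adj v q ∧ G.Adj p q) with ⟨x, y, hvx, hvy, hxy⟩ | hno
    · exact ⟨x, y, hxy.ne, hvx, hvy, fun p q hp hq hpq => huniq p q x y hp hq hvx hvy hpq hxy⟩
    · obtain ⟨x, hx, y, hy, hne⟩ := Finset.one_lt_card.mp (by omega : 1 < (G.neighborFinset v).card)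
      rw [SimpleGraph.mem_neighborFinset] at hx hy
      exact ⟨x, y, hne, hx, hy, fun p q hp hq hpq => absurd ⟨p, q, hp, hq, hpq⟩ hno⟩
  obtain ⟨x, y, hxy, hvx, hvy, hkey⟩ := hmain
  -- two further neighbors r ≠ s avoiding x and y
  have hx' : x ∈ G.neighborFinset v := (G.mem_neighborFinset v x).mpr hvx
  have hy' : y ∈ (G.neighborFinset v).erase x :=
    Finset.mem_erase.mpr ⟨hxy.symm, (G.mem_neighborFinset v y).mpr hvy⟩
  have hcard2 : 1 < (((G.neighborFinset v).erase x).erase y).card := by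
    have e1 := Finset.card_erase_of_mem hx'
    have e2 := Finset.card_erase_of_mem hy'
    omega
  obtain ⟨r, hr, s, hs, hrs⟩ := Finset.one_lt_card.mp hcard2
  obtain ⟨hry, hrx, hvr⟩ : r ≠ y ∧ r ≠ x ∧ G.Adj v r := by
    rw [Finset.mem_erase, Finset.mem_erase, SimpleGraph.mem_neighborFinset] at hr
    exact ⟨hr.1, hr.2.1, hr.2.2⟩
  obtain ⟨hsy, hsx, hvs⟩ : s ≠ y ∧ s ≠ x ∧ G.Adj v s := by
    rw [Finset.mem_erase, Finset.mem_erase, SimpleGraph.mem_neighborFinset] at hs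
    exact ⟨hs.1, hs.2.1, hs.2.2⟩
  -- non-adjacencies
  have pairne : ∀ p q : V, p ≠ x → p ≠ y → G.Adj v p → G.Adj v q → ¬ G.Adj p q := by
    intro p q hpx hpy hp hq hpq
    have := hkey p q hp hq hpq
    have hp' : p ∈ ({x, y} : Finset V) := this ▸ (by simp)
    simp only [Finset.mem_insert, Finset.mem_singleton] at hp'
    tauto
  have hxr : ¬ G.Adj x r := fun h => pairne r x hrx hry hvr hvx h.symm
  have hxs : ¬ G.Adj x s := fun h => pairne s x hsx hsy hvs hvx h.symm
  have hyr : ¬ G.Adj y r := fun h => pairne r y hrx hry hvr hvy h.symm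
  have hys : ¬ G.Adj y s := fun h => pairne s y hsx hsy hvs hvy h.symm
  have hrs' : ¬ G.Adj r s := pairne r s hrx hry hvr hvs
  -- triangles in the 2-distance graph
  have dxr : (twoDistGraph G).Adj x r := dist_eq_two'_s12 hvx hvr (Ne.symm hrx) hxr
  have dxs : (twoDistGraph G).Adj x s := dist_eq_two'_s12 hvx hvs (Ne.symm hsx) hxs
  have dyr : (twoDistGraph G).Adj y r := dist_eq_two'_s12 hvy hvr (Ne.symm hry) hyr
  have dys : (twoDistGraph G).Adj y s := dist_eq_two'_s12 hvy hvs (Ne.symm hsy) hys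
  have drs : (twoDistGraph G).Adj r s := dist_eq_two'_s12 hvr hvs hrs hrs'
  have t1 : G.IsNClique 3 {e x, e r, e s} :=
    SimpleGraph.is3Clique_triple_iff.mpr ⟨e.map_rel_iff.mpr dxr, e.map_rel_iff.mpr dxs,
      e.map_rel_iff.mpr drs⟩
  have t2 : G.IsNClique 3 {e y, e r, e s} :=
    SimpleGraph.is3Clique_triple_iff.mpr ⟨e.map_rel_iff.mpr dyr, e.map_rel_iff.mpr dys,
      e.map_rel_iff.mpr drs⟩
  have hT : ({e x, e r, e s} : Finset V) ≠ {e y, e r, e s} := by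
    intro h
    have hmem : e x ∈ ({e y, e r, e s} : Finset V) := h ▸ (by simp)
    simp only [Finset.mem_insert, Finset.mem_singleton] at hmem
    rcases hmem with h' | h' | h'
    · exact hxy (e.injective h')
    · exact (Ne.symm hrx) (e.injective h')
    · exact (Ne.symm hsx) (e.injective h')
  exact (Finset.disjoint_left.mp (htri _ _ t1 t2 hT)
    (show e r ∈ ({e x, e r, e s} : Finset V) by simp)) (by simp)

end C

section D
set_option linter.unusedSectionVars false
variable {V : Type*} [Fintype V] [DecidableEq V] (G : SimpleGraph V) [DecidableRel G.Adj]

/-- The neighbor of `cur` other than `prev`, if any; otherwise `cur` itself. -/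
noncomputable def nxt (prev cur : V) : V :=
  if h : ((G.neighborFinset cur).erase prev).Nonempty then h.choose else cur

variable {G}

lemma nxt_mem {prev cur : V} (h : ((G.neighborFinset cur).erase prev).Nonempty) :
    nxt G prev cur ∈ (G.neighborFinset cur).erase prev := by
  rw [nxt, dif_pos h]; exact h.choose_spec

lemma nxt_stuck {prev cur : V} (h : ¬ ((G.neighborFinset cur).erase prev).Nonempty) :
    nxt G prev cur = cur := dif_neg h

variable (G) in
noncomputable def seqAux (v0 v1 : V) : ℕ → V × V
  | 0 => (v0, v1)
  | n + 1 => ((seqAux v0 v1 n).2, nxt G (seqAux v0 v1 n).1 (seqAux v0 v1 n).2)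

variable (G) in
noncomputable def gseq (v0 v1 : V) (n : ℕ) : V := (seqAux G v0 v1 n).1

lemma gseq_zero {v0 v1 : V} : gseq G v0 v1 0 = v0 := rfl
lemma gseq_one {v0 v1 : V} : gseq G v0 v1 1 = v1 := rfl
lemma gseq_add_two {v0 v1 : V} (n : ℕ) :
    gseq G v0 v1 (n + 2) = nxt G (gseq G v0 v1 n) (gseq G v0 v1 (n + 1)) := rfl

end D

section E
set_option linter.unusedSectionVars false
variable {V : Type*} [Fintype V] [DecidableEq V] {G : SimpleGraph V} [DecidableRel G.Adj]

lemma path_case (hconn : G.Connected) (hcard : 1 < Fintype.card V)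
    (e : twoDistGraph G ≃g G) (h2 : ∀ v, G.degree v ≤ 2)
    {v0 : V} (hv0 : G.degree v0 ≤ 1) : False := by
  -- v0 has a neighbor v1
  obtain ⟨y, hy⟩ := Fintype.exists_ne_of_one_lt_card hcard v0
  obtain ⟨w⟩ := hconn v0 y
  have hlen : w.length ≠ 0 := fun h => hy.symm (SimpleGraph.Walk.eq_of_length_eq_zero h)
  have h01 : G.Adj v0 (w.getVert 1) := by
    have := w.adj_getVert_succ (i := 0) (by omega)
    rwa [w.getVert_zero] at this
  set v1 := w.getVert 1 with hv1def
  set f := gseq G v0 v1 with hfdef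
  have hf0 : f 0 = v0 := rfl
  have hf1 : f 1 = v1 := rfl
  have hf2 : ∀ k, f (k+2) = nxt G (f k) (f (k+1)) := fun k => rfl
  have huniq0 : ∀ x, G.Adj v0 x → x = v1 := by
    intro x hx
    exact Finset.card_le_one.mp hv0 x ((G.mem_neighborFinset v0 x).mpr hx)
      v1 ((G.mem_neighborFinset v0 v1).mpr h01)
  have hadj : ∀ k, (∀ j, j ≤ k → f (j+1) ≠ f j) → G.Adj (f k) (f (k+1)) := by
    intro k
    induction k with
    | zero => intro _; exact h01
    | succ k ih =>
      intro hsf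
      have hne : f (k+2) ≠ f (k+1) := hsf (k+1) le_rfl
      by_cases hc : ((G.neighborFinset (f (k+1))).erase (f k)).Nonempty
      · have hmem := nxt_mem hc
        rw [← hf2 k] at hmem
        rw [Finset.mem_erase, SimpleGraph.mem_neighborFinset] at hmem
        exact hmem.2
      · exact absurd (by rw [hf2 k]; exact nxt_stuck hc) hne
  have hne2 : ∀ k, (∀ j, j ≤ k+1 → f (j+1) ≠ f j) → f (k+2) ≠ f k := by
    intro k hsf
    by_cases hc : ((G.neighborFinset (f (k+1))).erase (f k)).Nonempty
    · have hmem := nxt_mem hc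
      rw [← hf2 k] at hmem
      exact (Finset.mem_erase.mp hmem).1
    · exact absurd (by rw [hf2 k]; exact nxt_stuck hc) (hsf (k+1) le_rfl)
  have hinj : ∀ k, (∀ j, j ≤ k → f (j+1) ≠ f j) → ∀ i j, i < j → j ≤ k+1 → f i ≠ f j := by
    intro k
    induction k with
    | zero =>
      intro hsf i j hij hj
      obtain ⟨rfl, rfl⟩ : i = 0 ∧ j = 1 := by omega
      exact (hsf 0 le_rfl).symm
    | succ k ih =>
      intro hsf i j hij hj
      by_cases hjk : j ≤ k + 1
      · exact ih (fun j' hj' => hsf j' (by omega)) i j hij hjk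
      · have hj2 : j = k + 2 := by omega
        subst hj2
        intro heq
        have hsf' : ∀ j', j' ≤ k → f (j'+1) ≠ f j' := fun j' hj' => hsf j' (by omega)
        have hadjk1 : G.Adj (f (k+1)) (f (k+2)) := hadj (k+1) hsf
        rcases Nat.lt_or_ge i (k+1) with hik | hik
        swap
        · have hik2 : i = k+1 := by omega
          rw [hik2] at heq
          exact hsf (k+1) le_rfl heq.symm
        rcases Nat.lt_or_ge i k with hik' | hik'
        swap
        · have hik2 : i = k := by omega
          rw [hik2] at heq
          exact hne2 k hsf heq.symm
        rcases Nat.eq_zero_or_pos i with rfl | hi0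
        · have hadj0 : G.Adj v0 (f (k+1)) := by
            rw [← heq] at hadjk1
            exact hadjk1.symm
          exact ih hsf' 1 (k+1) (by omega) (by omega) (huniq0 _ hadj0).symm
        · have ha : G.Adj (f i) (f (i+1)) := hadj i (fun j' hj' => hsf j' (by omega))
          have hb : G.Adj (f (i-1)) (f i) := by
            have := hadj (i-1) (fun j' hj' => hsf j' (by omega))
            rwa [show i - 1 + 1 = i by omega] at this
          have hcadj : G.Adj (f i) (f (k+1)) := by
            rw [← heq] at hadjk1
            exact hadjk1.symm
          have hne_ab : f (i+1) ≠ f (i-1) :=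
            Ne.symm (ih hsf' (i-1) (i+1) (by omega) (by omega))
          rcases adj_eq_of_two (h2 (f i)) ha hb.symm hne_ab hcadj with h | h
          · exact ih hsf' (i+1) (k+1) (by omega) (by omega) h.symm
          · exact ih hsf' (i-1) (k+1) (by omega) (by omega) h.symm
  have hstall : ∃ j, f (j+1) = f j := by
    by_contra hno
    push_neg at hno
    have hinj' := hinj (Fintype.card V + 1) (fun j _ => hno j)
    have hle : (Finset.range (Fintype.card V + 2)).card ≤ (Finset.univ : Finset V).card := by
      apply Finset.card_le_card_of_injOn f (fun a _ => Finset.mem_univ _)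
      intro i hi j hj hij
      simp only [Finset.coe_range, Set.mem_Iio] at hi hj
      rcases lt_trichotomy i j with h | h | h
      · exact absurd hij (hinj' i j h (by omega))
      · exact h
      · exact absurd hij.symm (hinj' j i h (by omega))
    rw [Finset.card_range, Finset.card_univ] at hle
    omega
  obtain ⟨m, hm, hmmin⟩ : ∃ m, f (m+1) = f m ∧ ∀ j, j < m → f (j+1) ≠ f j :=
    ⟨Nat.find hstall, Nat.find_spec hstall, fun j hj => Nat.find_min hstall hj⟩
  have hm1 : 1 ≤ m := by
    rcases Nat.eq_zero_or_pos m with h0 | h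
    · rw [h0] at hm
      exact absurd hm h01.ne'
    · exact h
  have hAdj : ∀ k, k < m → G.Adj (f k) (f (k+1)) :=
    fun k hk => hadj k (fun j hj => hmmin j (by omega))
  have hInj : ∀ i j, i < j → j ≤ m → f i ≠ f j := by
    intro i j hij hjm
    exact hinj (m-1) (fun j' hj' => hmmin j' (by omega)) i j hij (by omega)
  have hstuck : ∀ x, G.Adj (f m) x → x = f (m-1) := by
    intro x hx
    by_contra hne
    have hcne : ((G.neighborFinset (f m)).erase (f (m-1))).Nonempty :=
      ⟨x, Finset.mem_erase.mpr ⟨hne, (G.mem_neighborFinset _ _).mpr hx⟩⟩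
    have hmem := nxt_mem hcne
    have heq : nxt G (f (m-1)) (f m) = f (m+1) := by
      rw [show m + 1 = (m-1) + 2 by omega, hf2 (m-1), show m - 1 + 1 = m by omega]
    rw [heq, hm] at hmem
    rw [Finset.mem_erase, SimpleGraph.mem_neighborFinset] at hmem
    exact G.irrefl hmem.2
  have hclass : ∀ i, i ≤ m → ∀ x, G.Adj (f i) x →
      (1 ≤ i ∧ x = f (i-1)) ∨ (i < m ∧ x = f (i+1)) := by
    intro i him x hx
    rcases Nat.eq_zero_or_pos i with rfl | hi0
    · right
      exact ⟨by omega, huniq0 x hx⟩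
    by_cases him2 : i = m
    · subst him2
      left
      exact ⟨hi0, hstuck x hx⟩
    · have hilt : i < m := by omega
      have ha : G.Adj (f i) (f (i+1)) := hAdj i hilt
      have hb : G.Adj (f (i-1)) (f i) := by
        have := hAdj (i-1) (by omega)
        rwa [show i - 1 + 1 = i by omega] at this
      have hne_ab : f (i+1) ≠ f (i-1) := Ne.symm (hInj (i-1) (i+1) (by omega) (by omega))
      rcases adj_eq_of_two (h2 (f i)) ha hb.symm hne_ab hx with h | h
      · right; exact ⟨hilt, h⟩
      · left; exact ⟨hi0, h⟩
  have hsurj : ∀ v : V, ∃ i, i ≤ m ∧ f i = v := by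
    intro v
    have hcl : ∀ a ∈ {v : V | ∃ i, i ≤ m ∧ f i = v}, ∀ b, G.Adj a b →
        b ∈ {v : V | ∃ i, i ≤ m ∧ f i = v} := by
      rintro a ⟨i, him, rfl⟩ b hab
      rcases hclass i him b hab with ⟨h1, rfl⟩ | ⟨h1, rfl⟩
      · exact ⟨i-1, by omega, rfl⟩
      · exact ⟨i+1, by omega, rfl⟩
    obtain ⟨w'⟩ := hconn v0 v
    exact mem_of_closed hcl ⟨0, by omega, rfl⟩ w'
  have hidx : ∀ i j, i ≤ m → j ≤ m → f i = f j → i = j := by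
    intro i j hi hj h
    rcases lt_trichotomy i j with hlt | he | hlt
    · exact absurd h (hInj i j hlt hj)
    · exact he
    · exact absurd h.symm (hInj j i hlt hi)
  apply no_two_coloring hconn hcard e (fun v => (((hsurj v).choose : ℕ) : ZMod 2))
  intro x y hxy
  obtain ⟨hix, hfx⟩ := (hsurj x).choose_spec
  obtain ⟨hiy, hfy⟩ := (hsurj y).choose_spec
  have hadjf : G.Adj (f (hsurj x).choose) (f (hsurj y).choose) := by
    rw [hfx, hfy]; exact hxy
  rcases hclass _ hix _ hadjf with ⟨h1, hj'⟩ | ⟨h1, hj'⟩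
  · have hji : (hsurj y).choose = (hsurj x).choose - 1 := hidx _ _ hiy (by omega) hj'
    exact zmod2_cast_ne (by omega)
  · have hji : (hsurj y).choose = (hsurj x).choose + 1 := hidx _ _ hiy (by omega) hj'
    exact zmod2_cast_ne (by omega)

end E

section F
set_option linter.unusedSectionVars false
variable {V : Type*} [Fintype V] [DecidableEq V] {G : SimpleGraph V} [DecidableRel G.Adj]

lemma cycle_case (hconn : G.Connected) (hcard : 1 < Fintype.card V)
    (e : twoDistGraph G ≃g G)
    (hcyc : ∀ n : ℕ, 5 ≤ n → Odd n → IsEmpty (G ≃g cycleGraph n))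
    (hdeg : ∀ v, G.degree v = 2) : False := by
  have hV : Nonempty V := Fintype.card_pos_iff.mp (by omega)
  obtain ⟨v0⟩ := hV
  obtain ⟨v1, hv1⟩ := Finset.card_pos.mp
    (show 0 < (G.neighborFinset v0).card by
      have : (G.neighborFinset v0).card = G.degree v0 := rfl
      rw [this, hdeg]; omega)
  have h01 : G.Adj v0 v1 := (G.mem_neighborFinset v0 v1).mp hv1
  set f := gseq G v0 v1 with hfdef
  have hf0 : f 0 = v0 := rfl
  have hf1 : f 1 = v1 := rfl
  have hf2 : ∀ k, f (k+2) = nxt G (f k) (f (k+1)) := fun k => rfl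
  have herase : ∀ k, G.Adj (f k) (f (k+1)) →
      ((G.neighborFinset (f (k+1))).erase (f k)).Nonempty := by
    intro k hk
    have hmem : f k ∈ G.neighborFinset (f (k+1)) := (G.mem_neighborFinset _ _).mpr hk.symm
    have hc := Finset.card_erase_of_mem hmem
    have hd : (G.neighborFinset (f (k+1))).card = G.degree (f (k+1)) := rfl
    rw [hd, hdeg] at hc
    exact Finset.card_pos.mp (by omega)
  have hadj : ∀ k, G.Adj (f k) (f (k+1)) := by
    intro k
    induction k with
    | zero => exact h01
    | succ k ih =>
      have hmem := nxt_mem (herase k ih)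
      rw [← hf2 k] at hmem
      rw [Finset.mem_erase, SimpleGraph.mem_neighborFinset] at hmem
      exact hmem.2
  have hne2 : ∀ k, f (k+2) ≠ f k := by
    intro k
    have hmem := nxt_mem (herase k (hadj k))
    rw [← hf2 k] at hmem
    exact (Finset.mem_erase.mp hmem).1
  have hQ : ∃ j, ∃ i, i < j ∧ f i = f j := by
    by_contra hno
    push_neg at hno
    have hle : (Finset.range (Fintype.card V + 1)).card ≤ (Finset.univ : Finset V).card := by
      apply Finset.card_le_card_of_injOn f (fun a _ => Finset.mem_univ _)
      intro i hi j hj hij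
      rcases lt_trichotomy i j with h | h | h
      · exact absurd hij (hno j i h)
      · exact h
      · exact absurd hij.symm (hno i j h)
    rw [Finset.card_range, Finset.card_univ] at hle
    omega
  obtain ⟨n, hQn, hmin⟩ : ∃ n, (∃ i, i < n ∧ f i = f n) ∧
      ∀ j, j < n → ¬ ∃ i, i < j ∧ f i = f j :=
    ⟨Nat.find hQ, Nat.find_spec hQ, fun j hj => Nat.find_min hQ hj⟩
  obtain ⟨i0, hi0n, hi0⟩ := hQn
  have hInj : ∀ i j, i < j → j < n → f i ≠ f j := fun i j hij hj h => hmin j hj ⟨i, hij, h⟩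
  have hi00 : i0 = 0 := by
    by_contra hi0ne
    have hi01 : 1 ≤ i0 := by omega
    have hadjn : G.Adj (f (n-1)) (f n) := by
      have := hadj (n-1); rwa [show n-1+1 = n by omega] at this
    have hadji0 : G.Adj (f i0) (f (n-1)) := by
      rw [← hi0] at hadjn; exact hadjn.symm
    have ha : G.Adj (f i0) (f (i0+1)) := hadj i0
    have hb : G.Adj (f (i0-1)) (f i0) := by
      have := hadj (i0-1); rwa [show i0-1+1 = i0 by omega] at this
    have hne_ab : f (i0+1) ≠ f (i0-1) := by
      have := hne2 (i0-1); rwa [show i0-1+2 = i0+1 by omega] at this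
    have hi0n' : i0 + 1 < n := by
      by_contra hcon
      have h' : i0 + 1 = n := by omega
      rw [h', ← hi0] at ha
      exact G.irrefl ha
    rcases adj_eq_of_two (le_of_eq (hdeg (f i0))) ha hb.symm hne_ab hadji0 with h' | h'
    · by_cases hh : i0 + 1 = n - 1
      · have hcon := hne2 i0
        rw [show i0+2 = n by omega] at hcon
        exact hcon hi0.symm
      · exact hInj (i0+1) (n-1) (by omega) (by omega) h'.symm
    · exact hInj (i0-1) (n-1) (by omega) (by omega) h'.symm
  have hn0 : f n = f 0 := by rw [hi00] at hi0; exact hi0.symm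
  have hn3 : 3 ≤ n := by
    have hn1 : 1 ≤ n := by omega
    have hne1 : n ≠ 1 := by
      intro h
      have h1 := hadj 0
      rw [show (0:ℕ)+1 = 1 from rfl, show (1:ℕ) = n from h.symm, hn0] at h1
      exact G.irrefl h1
    have hne2' : n ≠ 2 := by
      intro h
      have := hne2 0
      rw [show (0:ℕ)+2 = 2 from rfl, show (2:ℕ) = n from h.symm] at this
      exact this hn0
    omega
  have hadj' : ∀ k, k < n → G.Adj (f k) (f ((k+1) % n)) := by
    intro k hk
    by_cases h : k + 1 < n
    · rw [Nat.mod_eq_of_lt h]; exact hadj k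
    · have hkn : k + 1 = n := by omega
      rw [hkn, Nat.mod_self, ← hn0, ← hkn]
      exact hadj k
  have hInjIdx : ∀ i j, i < n → j < n → f i = f j → i = j := by
    intro i j hi hj h
    rcases lt_trichotomy i j with hlt | he | hlt
    · exact absurd h (hInj i j hlt hj)
    · exact he
    · exact absurd h.symm (hInj j i hlt hi)
  have hclass : ∀ i, i < n → ∀ x, G.Adj (f i) x →
      x = f ((i+1) % n) ∨ x = f ((i + (n-1)) % n) := by
    intro i hi x hx
    rcases Nat.eq_zero_or_pos i with rfl | hi1
    · have ha : G.Adj (f 0) (f 1) := hadj 0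
      have hb : G.Adj (f 0) (f (n-1)) := by
        have := hadj (n-1)
        rw [show n-1+1 = n by omega, hn0] at this
        exact this.symm
      have hne_ab : f 1 ≠ f (n-1) := hInj 1 (n-1) (by omega) (by omega)
      rcases adj_eq_of_two (le_of_eq (hdeg (f 0))) ha hb hne_ab hx with h | h
      · left
        rw [show (0+1) % n = 1 from by rw [Nat.mod_eq_of_lt (by omega)]]
        exact h
      · right
        rw [show (0 + (n-1)) % n = n-1 from by
          rw [Nat.zero_add, Nat.mod_eq_of_lt (by omega)]]
        exact h
    · have ha : G.Adj (f i) (f ((i+1) % n)) := hadj' i hi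
      have hb : G.Adj (f (i-1)) (f i) := by
        have := hadj (i-1); rwa [show i-1+1 = i by omega] at this
      have hne_ab : f ((i+1)%n) ≠ f (i-1) := by
        by_cases h : i + 1 < n
        · rw [Nat.mod_eq_of_lt h]
          have := hne2 (i-1); rwa [show i-1+2 = i+1 by omega] at this
        · have hin : i + 1 = n := by omega
          rw [hin, Nat.mod_self]
          exact hInj 0 (i-1) (by omega) (by omega)
      rcases adj_eq_of_two (le_of_eq (hdeg (f i))) ha hb.symm hne_ab hx with h | h
      · left; exact h
      · right
        rw [show i + (n-1) = (i-1) + n by omega, Nat.add_mod_right,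
          Nat.mod_eq_of_lt (by omega)]
        exact h
  have hn0' : 0 < n := by omega
  have hsurj : ∀ v : V, ∃ i, i < n ∧ f i = v := by
    intro v
    have hcl : ∀ a ∈ {v : V | ∃ i, i < n ∧ f i = v}, ∀ b, G.Adj a b →
        b ∈ {v : V | ∃ i, i < n ∧ f i = v} := by
      rintro a ⟨i, hin, rfl⟩ b hab
      rcases hclass i hin b hab with rfl | rfl
      · exact ⟨(i+1) % n, Nat.mod_lt _ hn0', rfl⟩
      · exact ⟨(i + (n-1)) % n, Nat.mod_lt _ hn0', rfl⟩
    obtain ⟨w'⟩ := hconn v0 v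
    exact mem_of_closed hcl ⟨0, by omega, rfl⟩ w'
  have hbij : Function.Bijective (fun i : Fin n => f i.val) := by
    constructor
    · intro a b h
      exact Fin.ext (hInjIdx a.val b.val a.isLt b.isLt h)
    · intro v
      obtain ⟨i, hi, hfi⟩ := hsurj v
      exact ⟨⟨i, hi⟩, hfi⟩
  rcases Nat.even_or_odd n with heven | hodd
  · -- n even: 2-coloring
    apply no_two_coloring hconn hcard e (fun v => (((hsurj v).choose : ℕ) : ZMod 2))
    intro x y hxy
    obtain ⟨hix, hfx⟩ := (hsurj x).choose_spec
    obtain ⟨hiy, hfy⟩ := (hsurj y).choose_spec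
    have hadjf : G.Adj (f (hsurj x).choose) (f (hsurj y).choose) := by
      rw [hfx, hfy]; exact hxy
    obtain ⟨t, ht⟩ := heven
    rcases hclass _ hix _ hadjf with h | h
    · have hj := hInjIdx _ _ hiy (Nat.mod_lt _ hn0') h
      apply zmod2_cast_ne
      by_cases hlt : (hsurj x).choose + 1 < n
      · rw [Nat.mod_eq_of_lt hlt] at hj; omega
      · have hx1 : (hsurj x).choose + 1 = n := by omega
        rw [hx1, Nat.mod_self] at hj
        omega
    · have hj := hInjIdx _ _ hiy (Nat.mod_lt _ hn0') h
      apply zmod2_cast_ne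
      by_cases hx1 : 1 ≤ (hsurj x).choose
      · rw [show (hsurj x).choose + (n-1) = ((hsurj x).choose - 1) + n by omega,
          Nat.add_mod_right, Nat.mod_eq_of_lt (by omega)] at hj
        omega
      · have hx0 : (hsurj x).choose = 0 := by omega
        rw [hx0, Nat.zero_add, Nat.mod_eq_of_lt (by omega)] at hj
        omega
  · by_cases h3 : n = 3
    · -- triangle: the 2-distance graph has an edge but all distances are ≤ 1
      subst h3
      have hall : ∀ a b : V, a ≠ b → G.Adj a b := by
        intro a b hab
        obtain ⟨i, hi, rfl⟩ := hsurj a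
        obtain ⟨j, hj, rfl⟩ := hsurj b
        have f01 : G.Adj (f 0) (f 1) := hadj 0
        have f12 : G.Adj (f 1) (f 2) := hadj 1
        have f20 : G.Adj (f 2) (f 0) := by
          have := hadj 2
          rwa [show (2:ℕ)+1 = 3 from rfl, hn0] at this
        interval_cases i <;> interval_cases j <;>
          first
            | exact absurd rfl hab
            | exact f01 | exact f01.symm | exact f12 | exact f12.symm
            | exact f20 | exact f20.symm
      have h2d : (twoDistGraph G).Adj (e.symm v0) (e.symm v1) := by
        apply e.map_rel_iff.mp
        simp only [RelIso.apply_symm_apply]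
        exact h01
      have hnexy : e.symm v0 ≠ e.symm v1 := fun h => h01.ne (by simpa using congrArg e h)
      have hd2 : G.dist (e.symm v0) (e.symm v1) = 2 := h2d
      have hd1 : G.dist (e.symm v0) (e.symm v1) = 1 :=
        dist_eq_one_iff_adj.mpr (hall _ _ hnexy)
      omega
    · have h5 : 5 ≤ n := by
        rcases hodd with ⟨t, ht⟩
        omega
      have key : ∀ a b : Fin n, G.Adj (f a.val) (f b.val) ↔ (cycleGraph n).Adj a b := by
        intro a b
        rw [SimpleGraph.cycleGraph_adj']
        have hsubval : ∀ u w : Fin n, (u - w).val = ((n - w.val) + u.val) % n :=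
          fun u w => by rw [Fin.sub_def]
        constructor
        · intro hab
          have hne' : a ≠ b := fun h => G.irrefl (h ▸ hab)
          rcases hclass a.val a.isLt _ hab with h | h
          · have hb' := hInjIdx b.val ((a.val+1) % n) b.isLt (Nat.mod_lt _ hn0') h
            right
            rw [hsubval]
            by_cases hlt : a.val + 1 < n
            · rw [Nat.mod_eq_of_lt hlt] at hb'
              rw [show (n - a.val) + b.val = n + 1 by omega, Nat.add_mod_left,
                Nat.mod_eq_of_lt (by omega)]
            · have han : a.val + 1 = n := by omega
              rw [han, Nat.mod_self] at hb'
              rw [show (n - a.val) + b.val = 1 by omega, Nat.mod_eq_of_lt (by omega)]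
          · have hb' := hInjIdx b.val ((a.val + (n-1)) % n) b.isLt (Nat.mod_lt _ hn0') h
            left
            rw [hsubval]
            by_cases ha1 : 1 ≤ a.val
            · rw [show a.val + (n-1) = (a.val - 1) + n by omega, Nat.add_mod_right,
                Nat.mod_eq_of_lt (by omega)] at hb'
              rw [show (n - b.val) + a.val = n + 1 by omega, Nat.add_mod_left,
                Nat.mod_eq_of_lt (by omega)]
            · have ha0 : a.val = 0 := by omega
              rw [ha0, Nat.zero_add, Nat.mod_eq_of_lt (by omega)] at hb'
              rw [show (n - b.val) + a.val = 1 by omega, Nat.mod_eq_of_lt (by omega)]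
        · intro hab
          rcases hab with h | h
          · rw [hsubval] at h
            rcases Nat.lt_or_ge ((n - b.val) + a.val) n with hlt | hge
            · rw [Nat.mod_eq_of_lt hlt] at h
              have hb' : b.val = n - 1 ∧ a.val = 0 := by
                have := b.isLt
                omega
              have hstep := hadj' (n-1) (by omega)
              rw [show n-1+1 = n by omega, Nat.mod_self] at hstep
              rw [hb'.1, hb'.2]
              exact hstep.symm
            · rw [Nat.mod_eq_sub_mod hge, Nat.mod_eq_of_lt (by
                have := a.isLt; have := b.isLt; omega)] at h
              have hb' : a.val = b.val + 1 := by
                have := a.isLt; have := b.isLt; omega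
              rw [hb']
              exact (hadj b.val).symm
          · rw [hsubval] at h
            rcases Nat.lt_or_ge ((n - a.val) + b.val) n with hlt | hge
            · rw [Nat.mod_eq_of_lt hlt] at h
              have hb' : a.val = n - 1 ∧ b.val = 0 := by
                have := a.isLt
                omega
              have hstep := hadj' (n-1) (by omega)
              rw [show n-1+1 = n by omega, Nat.mod_self] at hstep
              rw [hb'.1, hb'.2]
              exact hstep
            · rw [Nat.mod_eq_sub_mod hge, Nat.mod_eq_of_lt (by
                have := a.isLt; have := b.isLt; omega)] at h
              have hb' : b.val = a.val + 1 := by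
                have := a.isLt; have := b.isLt; omega
              rw [hb']
              exact hadj a.val
      have iso : cycleGraph n ≃g G := ⟨Equiv.ofBijective _ hbij, key _ _⟩
      exact (hcyc n h5 hodd).false iso.symm

end F

/-- A connected self 2-distance graph with pairwise vertex-disjoint triangles,
not an odd cycle of length ≥ 5, has maximum degree 3. -/
theorem maxDegree_eq_three_of_disjointTriangles {V : Type*} [Fintype V]
    (G : SimpleGraph V) [DecidableRel G.Adj]
    (hconn : G.Connected) (hcard : 1 < Fintype.card V)
    (hself : Nonempty (twoDistGraph G ≃g G))
    (htri : ∀ s t : Finset V, G.IsNClique 3 s → G.IsNClique 3 t → s ≠ t → Disjoint s t)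
    (hcyc : ∀ n : ℕ, 5 ≤ n → Odd n → IsEmpty (G ≃g cycleGraph n)) :
    G.maxDegree = 3 := by
  classical
  obtain ⟨e⟩ := hself
  have hub : ∀ v, G.degree v ≤ 3 := deg_le_three htri e
  have hlb : ∃ v, 3 ≤ G.degree v := by
    by_contra h
    push_neg at h
    have h2 : ∀ v, G.degree v ≤ 2 := fun v => by have := h v; omega
    by_cases hone : ∃ v, G.degree v ≤ 1
    · obtain ⟨v, hv⟩ := hone
      exact path_case hconn hcard e h2 hv
    · push_neg at hone
      exact cycle_case hconn hcard e hcyc (fun v => le_antisymm (h2 v) (hone v))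
  obtain ⟨v, hv⟩ := hlb
  exact le_antisymm (G.maxDegree_le_of_forall_degree_le 3 hub)
    (le_trans hv (G.degree_le_maxDegree v))
end

section
/- Let Γ be a finite connected self 2-distance graph with at least two vertices whose triangles are pairwise vertex-disjoint, and which is not isomorphic to the cycle graph Cₙ for any odd n ≥ 5. If Γ contains C₅|C₃ as a subgraph (i.e., there are six distinct vertices carrying all seven required adjacencies), then Γ is isomorphic to C₅|C₃. -/
open SimpleGraph

section Dist2
variable {W : Type*} {H : SimpleGraph W} {u v : W}

lemma dist2_iff : H.dist u v = 2 ↔ ¬H.Adj u v ∧ u ≠ v ∧ ∃ w, H.Adj u w ∧ H.Adj w v := by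
  constructor
  · intro h
    have hne : u ≠ v := by rintro rfl; simp [SimpleGraph.dist_self] at h
    have hr : H.Reachable u v := by
      by_contra hr
      have h0 : H.dist u v = 0 := SimpleGraph.dist_eq_zero_iff_eq_or_not_reachable.2 (Or.inr hr)
      omega
    obtain ⟨p, hp⟩ := hr.exists_walk_length_eq_dist
    rw [h] at hp
    cases p with
    | nil => simp at hp
    | cons h1 q =>
      cases q with
      | nil => simp at hp
      | cons h2 r =>
        cases r with
        | nil =>
          refine ⟨fun ha => ?_, hne, _, h1, h2⟩
          have := SimpleGraph.dist_eq_one_iff_adj.mpr ha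
          omega
        | cons h3 r' => simp [SimpleGraph.Walk.length_cons] at hp
  · rintro ⟨hna, hne, w, h1, h2⟩
    have hle : H.dist u v ≤ 2 := by
      have := SimpleGraph.dist_le (SimpleGraph.Walk.cons h1 (SimpleGraph.Walk.cons h2 SimpleGraph.Walk.nil))
      simpa using this
    have h0 : H.dist u v ≠ 0 := by
      rw [Ne, SimpleGraph.dist_eq_zero_iff_eq_or_not_reachable]
      push_neg
      exact ⟨hne, (SimpleGraph.Walk.cons h1 (SimpleGraph.Walk.cons h2 SimpleGraph.Walk.nil)).reachable⟩
    have h1' : H.dist u v ≠ 1 := fun hh => hna (SimpleGraph.dist_eq_one_iff_adj.mp hh)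
    omega

lemma tdg_adj : (twoDistGraph H).Adj u v ↔ ¬H.Adj u v ∧ u ≠ v ∧ ∃ w, H.Adj u w ∧ H.Adj w v :=
  dist2_iff

lemma tdg_of (hna : ¬H.Adj u v) (hne : u ≠ v) {w : W} (h1 : H.Adj u w) (h2 : H.Adj w v) :
    (twoDistGraph H).Adj u v := tdg_adj.mpr ⟨hna, hne, w, h1, h2⟩

lemma tdg_not_adj (h : (twoDistGraph H).Adj u v) : ¬H.Adj u v := (tdg_adj.mp h).1
lemma adj_not_tdg (h : H.Adj u v) : ¬(twoDistGraph H).Adj u v := fun h2 => tdg_not_adj h2 h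

end Dist2

/-- Triangles pairwise vertex-disjoint. -/
def TD {W : Type*} (H : SimpleGraph W) : Prop :=
  ∀ s t, H.IsNClique 3 s → H.IsNClique 3 t → s ≠ t → Disjoint s t

lemma TD.overlap {W : Type*} {H : SimpleGraph W} (hT : TD H) {a b c d e : W}
    (hab : H.Adj a b) (hac : H.Adj a c) (hbc : H.Adj b c)
    (had : H.Adj a d) (hae : H.Adj a e) (hde : H.Adj d e)
    (hda : d ≠ a) (hdb : d ≠ b) (hdc : d ≠ c) : False := by
  classical
  have h1 : H.IsNClique 3 {a, b, c} := is3Clique_triple_iff.mpr ⟨hab, hac, hbc⟩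
  have h2 : H.IsNClique 3 {a, d, e} := is3Clique_triple_iff.mpr ⟨had, hae, hde⟩
  have hne : ({a, b, c} : Finset W) ≠ {a, d, e} := by
    intro hEq
    have hd : d ∈ ({a, b, c} : Finset W) := by rw [hEq]; simp
    simp only [Finset.mem_insert, Finset.mem_singleton] at hd
    rcases hd with h | h | h
    exacts [hda h, hdb h, hdc h]
  have hmem := Finset.disjoint_left.mp (hT _ _ h1 h2 hne)
    (show a ∈ ({a, b, c} : Finset W) by simp)
  exact hmem (by simp)

/-- Transport of the two-distance graph along an isomorphism. -/
def tdgIso {W W' : Type*} {H : SimpleGraph W} {H' : SimpleGraph W'} (e : H ≃g H') :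
    twoDistGraph H ≃g twoDistGraph H' where
  toEquiv := e.toEquiv
  map_rel_iff' := by
    intro u v
    show (twoDistGraph H').Adj (e u) (e v) ↔ (twoDistGraph H).Adj u v
    rw [tdg_adj, tdg_adj]
    constructor
    · rintro ⟨hna, hne, w, h1, h2⟩
      refine ⟨fun h => hna (e.map_rel_iff.mpr h), fun h => hne (by rw [h]), e.symm w, ?_, ?_⟩
      · have : H'.Adj (e u) (e (e.symm w)) := by rwa [RelIso.apply_symm_apply]
        exact e.map_rel_iff.mp this
      · have : H'.Adj (e (e.symm w)) (e v) := by rwa [RelIso.apply_symm_apply]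
        exact e.map_rel_iff.mp this
    · rintro ⟨hna, hne, w, h1, h2⟩
      refine ⟨fun h => hna (e.map_rel_iff.mp h), fun h => hne (e.toEquiv.injective h), e w,
        e.map_rel_iff.mpr h1, e.map_rel_iff.mpr h2⟩

lemma TD.of_iso {W W' : Type*} {H : SimpleGraph W} {H' : SimpleGraph W'} (e : H ≃g H')
    (hT : TD H') : TD H := by
  classical
  intro s t h1 h2 hne
  have hle : SimpleGraph.map e.toEquiv.toEmbedding H ≤ H' := by
    intro a b
    rw [SimpleGraph.map_adj]
    rintro ⟨x, y, hxy, rfl, rfl⟩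
    exact e.map_rel_iff.mpr hxy
  have m1 : H'.IsNClique 3 (s.map e.toEquiv.toEmbedding) := (h1.map).mono hle
  have m2 : H'.IsNClique 3 (t.map e.toEquiv.toEmbedding) := (h2.map).mono hle
  have hmne : s.map e.toEquiv.toEmbedding ≠ t.map e.toEquiv.toEmbedding :=
    fun h => hne (Finset.map_injective _ h)
  have hdisj := hT _ _ m1 m2 hmne
  rw [Finset.disjoint_left] at hdisj ⊢
  intro a ha hat
  exact hdisj (Finset.mem_map_of_mem _ ha) (Finset.mem_map_of_mem _ hat)

section Package
variable {W : Type*} {H : SimpleGraph W}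

/-- A labelled copy of C₅|C₃ inside `H` (seven adjacencies + distinctness). -/
structure Cop (H : SimpleGraph W) (c0 c1 c2 c3 c4 c5 : W) : Prop where
  a01 : H.Adj c0 c1
  a12 : H.Adj c1 c2
  a23 : H.Adj c2 c3
  a34 : H.Adj c3 c4
  a45 : H.Adj c4 c5
  a50 : H.Adj c5 c0
  a15 : H.Adj c1 c5
  d02 : c0 ≠ c2
  d03 : c0 ≠ c3
  d04 : c0 ≠ c4
  d13 : c1 ≠ c3
  d14 : c1 ≠ c4
  d24 : c2 ≠ c4
  d25 : c2 ≠ c5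
  d35 : c3 ≠ c5

namespace Cop

variable {c0 c1 c2 c3 c4 c5 : W}

lemma mirror (hC : Cop H c0 c1 c2 c3 c4 c5) : Cop H c0 c5 c4 c3 c2 c1 :=
  ⟨hC.a50.symm, hC.a45.symm, hC.a34.symm, hC.a23.symm, hC.a12.symm, hC.a01.symm, hC.a15.symm,
    hC.d04, hC.d03, hC.d02, hC.d35.symm, hC.d25.symm, hC.d24.symm, hC.d14.symm, hC.d13.symm⟩

lemma prime (hC : Cop H c0 c1 c2 c3 c4 c5) (h24 : H.Adj c2 c4) : Cop H c3 c2 c1 c0 c5 c4 :=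
  ⟨hC.a23.symm, hC.a12.symm, hC.a01.symm, hC.a50.symm, hC.a45.symm, hC.a34.symm, h24,
    hC.d13.symm, hC.d03.symm, hC.d35, hC.d02.symm, hC.d25, hC.a15.ne, hC.d14, hC.d04⟩


lemma n02 (hC : Cop H c0 c1 c2 c3 c4 c5) (hT : TD H) : ¬H.Adj c0 c2 := fun h =>
  hT.overlap hC.a01 h hC.a12 hC.a50.symm hC.a01 hC.a15.symm hC.a50.ne hC.a15.ne' hC.d25.symm

lemma n04 (hC : Cop H c0 c1 c2 c3 c4 c5) (hT : TD H) : ¬H.Adj c0 c4 := fun h =>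
  hT.overlap hC.a01 hC.a50.symm hC.a15 h hC.a50.symm hC.a45 hC.d04.symm hC.d14.symm hC.a45.ne

lemma n14 (hC : Cop H c0 c1 c2 c3 c4 c5) (hT : TD H) : ¬H.Adj c1 c4 := fun h =>
  hT.overlap hC.a01.symm hC.a15 hC.a50.symm h hC.a15 hC.a45 hC.d14.symm hC.d04.symm hC.a45.ne

lemma n25 (hC : Cop H c0 c1 c2 c3 c4 c5) (hT : TD H) : ¬H.Adj c2 c5 := fun h =>
  hT.overlap hC.a01.symm hC.a15 hC.a50.symm hC.a12 hC.a15 h hC.a12.ne' hC.d02.symm hC.d25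

lemma n13 (hC : Cop H c0 c1 c2 c3 c4 c5) (hT : TD H) : ¬H.Adj c1 c3 := fun h =>
  hT.overlap hC.a01.symm hC.a15 hC.a50.symm hC.a12 h hC.a23 hC.a12.ne' hC.d02.symm hC.d25

lemma n35 (hC : Cop H c0 c1 c2 c3 c4 c5) (hT : TD H) : ¬H.Adj c3 c5 := fun h =>
  hT.overlap hC.a15.symm hC.a50 hC.a01.symm h.symm hC.a45.symm hC.a34 hC.d35 hC.d13.symm hC.d03.symm

lemma D02 (hC : Cop H c0 c1 c2 c3 c4 c5) (hT : TD H) : (twoDistGraph H).Adj c0 c2 := tdg_of (hC.n02 hT) hC.d02 hC.a01 hC.a12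
lemma D04 (hC : Cop H c0 c1 c2 c3 c4 c5) (hT : TD H) : (twoDistGraph H).Adj c0 c4 := tdg_of (hC.n04 hT) hC.d04 hC.a50.symm hC.a45.symm
lemma D13 (hC : Cop H c0 c1 c2 c3 c4 c5) (hT : TD H) : (twoDistGraph H).Adj c1 c3 := tdg_of (hC.n13 hT) hC.d13 hC.a12 hC.a23
lemma D35 (hC : Cop H c0 c1 c2 c3 c4 c5) (hT : TD H) : (twoDistGraph H).Adj c3 c5 := tdg_of (hC.n35 hT) hC.d35 hC.a34 hC.a45
lemma D14 (hC : Cop H c0 c1 c2 c3 c4 c5) (hT : TD H) : (twoDistGraph H).Adj c1 c4 := tdg_of (hC.n14 hT) hC.d14 hC.a15 hC.a45.symm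
lemma D25 (hC : Cop H c0 c1 c2 c3 c4 c5) (hT : TD H) : (twoDistGraph H).Adj c2 c5 := tdg_of (hC.n25 hT) hC.d25 hC.a12.symm hC.a15
lemma D24 (hC : Cop H c0 c1 c2 c3 c4 c5) (hT : TD H) (h24 : ¬H.Adj c2 c4) : (twoDistGraph H).Adj c2 c4 := tdg_of h24 hC.d24 hC.a23 hC.a34

/-- In the chordless case, the two-distance graph contains the copy
`(c0, c2, c5, c3, c1, c4)` of C₅|C₃. -/
lemma Dcop (hC : Cop H c0 c1 c2 c3 c4 c5) (hT : TD H) (h24 : ¬H.Adj c2 c4) : Cop (twoDistGraph H) c0 c2 c5 c3 c1 c4 :=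
  ⟨hC.D02 hT, hC.D25 hT, (hC.D35 hT).symm, (hC.D13 hT).symm, hC.D14 hT, (hC.D04 hT).symm,
    hC.D24 hT h24,
    hC.a50.ne', hC.d03, hC.a01.ne, hC.a23.ne, hC.a12.ne', hC.a15.ne', hC.a45.ne', hC.a34.ne⟩


/-- The only common neighbour of `c2` and `c4` can be `c3`. -/
lemma GL1 (hC : Cop H c0 c1 c2 c3 c4 c5) (hT : TD H) (hT2 : TD (twoDistGraph H)) : ∀ y, H.Adj y c2 → H.Adj y c4 → y = c3 := by
  intro y h2 h4
  by_contra hy3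
  by_cases h24 : H.Adj c2 c4
  · exact hT.overlap h2.symm h24 h4 hC.a23 h24 hC.a34 hC.a23.ne' (fun h => hy3 h.symm) hC.a34.ne
  · have hy0 : y ≠ c0 := fun h => hC.n02 hT (h ▸ h2)
    have hy1 : y ≠ c1 := fun h => hC.n14 hT (h ▸ h4)
    have hy5 : y ≠ c5 := fun h => hC.n25 hT ((h ▸ h2).symm)
    have hn3 : ¬H.Adj y c3 := fun h3 =>
      hT.overlap h2 h3 hC.a23 h4 h3 hC.a34.symm h4.ne' hC.d24.symm hC.a34.ne'
    have hn1 : ¬H.Adj y c1 := fun h1 =>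
      hT.overlap h1.symm hC.a12 h2 hC.a01.symm hC.a15 hC.a50.symm hC.a01.ne (Ne.symm hy0) hC.d02
    have hn5 : ¬H.Adj y c5 := fun h5 =>
      hT.overlap h5.symm hC.a45.symm h4 hC.a50 hC.a15.symm hC.a01 hC.a50.ne' (Ne.symm hy0) hC.d04
    have D1 : (twoDistGraph H).Adj y c1 := tdg_of hn1 hy1 h2 hC.a12.symm
    have D5 : (twoDistGraph H).Adj y c5 := tdg_of hn5 hy5 h4 hC.a45
    have D3 : (twoDistGraph H).Adj y c3 := tdg_of hn3 hy3 h2 hC.a23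
    exact hT2.overlap D1 D3 (hC.D13 hT) D5 D3 (hC.D35 hT).symm (Ne.symm hy5) hC.a15.ne'
      (Ne.symm hC.d35)

/-- Neighbours of `c1` lie in `{c0, c2, c5}`. -/
lemma C4 (hC : Cop H c0 c1 c2 c3 c4 c5) (hT : TD H) (hT2 : TD (twoDistGraph H)) : ∀ x, H.Adj x c1 → x = c0 ∨ x = c2 ∨ x = c5 := by
  intro x h1
  by_contra hx
  push_neg at hx
  obtain ⟨hx0, hx2, hx5⟩ := hx
  have hn0 : ¬H.Adj x c0 := fun h0 =>
    hT.overlap h0.symm hC.a01 h1 hC.a50.symm hC.a01 hC.a15.symm hC.a50.ne (Ne.symm hx5) hC.a15.ne'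
  have hn2 : ¬H.Adj x c2 := fun h2 =>
    hT.overlap h1.symm hC.a12 h2 hC.a01.symm hC.a15 hC.a50.symm hC.a01.ne (Ne.symm hx0) hC.d02
  have hn5 : ¬H.Adj x c5 := fun h5 =>
    hT.overlap h1.symm hC.a15 h5 hC.a01.symm hC.a15 hC.a50.symm hC.a01.ne (Ne.symm hx0) hC.a50.ne'
  have D0 : (twoDistGraph H).Adj x c0 := tdg_of hn0 hx0 h1 hC.a01.symm
  have D2 : (twoDistGraph H).Adj x c2 := tdg_of hn2 hx2 h1 hC.a12
  have D5 : (twoDistGraph H).Adj x c5 := tdg_of hn5 hx5 h1 hC.a15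
  exact hT2.overlap D0 D2 (hC.D02 hT) D5 D2 (hC.D25 hT).symm (Ne.symm hx5) hC.a50.ne hC.d25.symm

/-- Neighbours of `c5` lie in `{c0, c4, c1}`. -/
lemma C5 (hC : Cop H c0 c1 c2 c3 c4 c5) (hT : TD H) (hT2 : TD (twoDistGraph H)) : ∀ x, H.Adj x c5 → x = c0 ∨ x = c4 ∨ x = c1 := hC.mirror.C4 hT hT2

/-- Chordless case: neighbours of `c3` lie in `{c2, c4, c0}`. -/
lemma C2' (hC : Cop H c0 c1 c2 c3 c4 c5) (hT : TD H) (hT2 : TD (twoDistGraph H)) (h24 : ¬H.Adj c2 c4) : ∀ x, H.Adj x c3 → x = c2 ∨ x = c4 ∨ x = c0 := by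
  intro x h3
  by_contra hx
  push_neg at hx
  obtain ⟨hx2, hx4, hx0⟩ := hx
  have hx1 : x ≠ c1 := fun h => hC.n13 hT (h ▸ h3)
  have hx5 : x ≠ c5 := fun h => hC.n35 hT ((h ▸ h3).symm)
  by_cases a2 : H.Adj x c2
  · by_cases a4 : H.Adj x c4
    · exact absurd (hC.GL1 hT hT2 x a2 a4) h3.ne
    · have hn1 : ¬H.Adj x c1 := fun h1 =>
        hT.overlap h1.symm hC.a12 a2 hC.a01.symm hC.a15 hC.a50.symm hC.a01.ne (Ne.symm hx0) hC.d02
      have D1 : (twoDistGraph H).Adj x c1 := tdg_of hn1 hx1 a2 hC.a12.symm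
      have D4 : (twoDistGraph H).Adj x c4 := tdg_of a4 hx4 h3 hC.a34
      exact hT2.overlap D4.symm (hC.D14 hT).symm D1 (hC.D04 hT).symm (hC.D24 hT h24).symm
        (hC.D02 hT) hC.d04 (Ne.symm hx0) hC.a01.ne
  · by_cases a4 : H.Adj x c4
    · have hn5 : ¬H.Adj x c5 := fun h5 =>
        hT.overlap h5.symm hC.a45.symm a4 hC.a50 hC.a15.symm hC.a01 hC.a50.ne' (Ne.symm hx0) hC.d04
      have D5 : (twoDistGraph H).Adj x c5 := tdg_of hn5 hx5 a4 hC.a45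
      have D2 : (twoDistGraph H).Adj x c2 := tdg_of a2 hx2 h3 hC.a23.symm
      exact hT2.overlap D2.symm (hC.D25 hT) D5 (hC.D02 hT).symm (hC.D24 hT h24) (hC.D04 hT)
        hC.d02 (Ne.symm hx0) hC.a50.ne'
    · have D2 : (twoDistGraph H).Adj x c2 := tdg_of a2 hx2 h3 hC.a23.symm
      have D4 : (twoDistGraph H).Adj x c4 := tdg_of a4 hx4 h3 hC.a34
      exact hT2.overlap D2.symm (hC.D24 hT h24) D4 (hC.D02 hT).symm (hC.D24 hT h24) (hC.D04 hT)
        hC.d02 (Ne.symm hx0) hC.d04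


/-- Chordless case: neighbours of `c0` lie in `{c1, c5, c3}`. -/
lemma C1 (hC : Cop H c0 c1 c2 c3 c4 c5) (hT : TD H) (hT2 : TD (twoDistGraph H)) (hT4 : TD (twoDistGraph (twoDistGraph H))) (h24 : ¬H.Adj c2 c4) : ∀ x, H.Adj x c0 → x = c1 ∨ x = c5 ∨ x = c3 := by
  intro x h0
  by_contra hx
  push_neg at hx
  obtain ⟨hx1, hx5, hx3⟩ := hx
  have hn1 : ¬H.Adj x c1 := fun h1 =>
    hT.overlap h0.symm hC.a01 h1 hC.a50.symm hC.a01 hC.a15.symm hC.a50.ne (Ne.symm hx5) hC.a15.ne'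
  have hn5 : ¬H.Adj x c5 := fun h5 =>
    hT.overlap h0.symm hC.a50.symm h5 hC.a01 hC.a50.symm hC.a15 hC.a01.ne' (Ne.symm hx1) hC.a15.ne
  have D1 : (twoDistGraph H).Adj x c1 := tdg_of hn1 hx1 h0 hC.a01
  have D5 : (twoDistGraph H).Adj x c5 := tdg_of hn5 hx5 h0 hC.a50.symm
  exact hx3 ((hC.Dcop hT h24).GL1 hT2 hT4 x D5 D1)

/-- Chordless case: neighbours of `c2` lie in `{c1, c3}`. -/
lemma C3 (hC : Cop H c0 c1 c2 c3 c4 c5) (hT : TD H) (hT2 : TD (twoDistGraph H)) (hT4 : TD (twoDistGraph (twoDistGraph H))) (h24 : ¬H.Adj c2 c4) : ∀ x, H.Adj x c2 → x = c1 ∨ x = c3 := by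
  intro x h2
  by_contra hx
  push_neg at hx
  obtain ⟨hx1, hx3⟩ := hx
  have hx0 : x ≠ c0 := fun h => hC.n02 hT (h ▸ h2)
  have hx4 : x ≠ c4 := fun h => h24 ((h ▸ h2).symm)
  have hx5 : x ≠ c5 := fun h => hC.n25 hT ((h ▸ h2).symm)
  have hn1 : ¬H.Adj x c1 := fun h1 =>
    hT.overlap h1.symm hC.a12 h2 hC.a01.symm hC.a15 hC.a50.symm hC.a01.ne (Ne.symm hx0) hC.d02
  by_cases a3 : H.Adj x c3
  · have hn4 : ¬H.Adj x c4 := fun h4 =>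
      hT.overlap h2 a3 hC.a23 h4 a3 hC.a34.symm h4.ne' hC.d24.symm hC.a34.ne'
    have D4 : (twoDistGraph H).Adj x c4 := tdg_of hn4 hx4 a3 hC.a34
    have D1 : (twoDistGraph H).Adj x c1 := tdg_of hn1 hx1 h2 hC.a12.symm
    exact hT2.overlap D4.symm (hC.D14 hT).symm D1 (hC.D04 hT).symm (hC.D24 hT h24).symm
      (hC.D02 hT) hC.d04 (Ne.symm hx0) hC.a01.ne
  · have D3 : (twoDistGraph H).Adj x c3 := tdg_of a3 hx3 h2 hC.a23
    rcases (hC.Dcop hT h24).C2' hT2 hT4 (adj_not_tdg hC.a15.symm) x D3 with h | h | h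
    · exact hx5 h
    · exact hx1 h
    · exact hx0 h

/-- Chorded case: neighbours of `c0` lie in `{c1, c5, c3}`. -/
lemma E0 (hC : Cop H c0 c1 c2 c3 c4 c5) (hT : TD H) (hT2 : TD (twoDistGraph H)) (hT4 : TD (twoDistGraph (twoDistGraph H))) (h24 : H.Adj c2 c4) : ∀ x, H.Adj x c0 → x = c1 ∨ x = c5 ∨ x = c3 := by
  intro x h0
  by_contra hx
  push_neg at hx
  obtain ⟨hx1, hx5, hx3⟩ := hx
  have hx2 : x ≠ c2 := fun h => hC.n02 hT ((h ▸ h0).symm)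
  have hx4 : x ≠ c4 := fun h => hC.n04 hT ((h ▸ h0).symm)
  have N2 := (hC.prime h24).C4 hT hT2
  have N4 := (hC.prime h24).C5 hT hT2
  have hn1 : ¬H.Adj x c1 := fun h1 =>
    hT.overlap h0.symm hC.a01 h1 hC.a50.symm hC.a01 hC.a15.symm hC.a50.ne (Ne.symm hx5) hC.a15.ne'
  have hn5 : ¬H.Adj x c5 := fun h5 =>
    hT.overlap h0.symm hC.a50.symm h5 hC.a01 hC.a50.symm hC.a15 hC.a01.ne' (Ne.symm hx1) hC.a15.ne
  have D1 : (twoDistGraph H).Adj x c1 := tdg_of hn1 hx1 h0 hC.a01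
  have D5 : (twoDistGraph H).Adj x c5 := tdg_of hn5 hx5 h0 hC.a50.symm
  have hn2 : ¬H.Adj x c2 := fun h2 => by
    rcases N2 x h2 with h | h | h
    exacts [hx3 h, hx1 h, hx4 h]
  have hn4 : ¬H.Adj x c4 := fun h4 => by
    rcases N4 x h4 with h | h | h
    exacts [hx3 h, hx5 h, hx2 h]
  have hn3 : ¬H.Adj x c3 := fun h3 => by
    have D2 : (twoDistGraph H).Adj x c2 := tdg_of hn2 hx2 h3 hC.a23.symm
    have D4 : (twoDistGraph H).Adj x c4 := tdg_of hn4 hx4 h3 hC.a34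
    exact hT2.overlap D1 D4 (hC.D14 hT) D5 D2 (hC.D25 hT).symm (Ne.symm hx5) hC.a15.ne'
      hC.a45.ne'
  have nD2 : ¬(twoDistGraph H).Adj x c2 := by
    intro hD
    obtain ⟨-, -, w, hw1, hw2⟩ := tdg_adj.mp hD
    rcases N2 w hw2 with h | h | h
    · exact hn3 (h ▸ hw1)
    · exact hn1 (h ▸ hw1)
    · exact hn4 (h ▸ hw1)
  have nD4 : ¬(twoDistGraph H).Adj x c4 := by
    intro hD
    obtain ⟨-, -, w, hw1, hw2⟩ := tdg_adj.mp hD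
    rcases N4 w hw2 with h | h | h
    · exact hn3 (h ▸ hw1)
    · exact hn5 (h ▸ hw1)
    · exact hn2 (h ▸ hw1)
  have E2 : (twoDistGraph (twoDistGraph H)).Adj x c2 := tdg_of nD2 hx2 D5 (hC.D25 hT).symm
  have E4 : (twoDistGraph (twoDistGraph H)).Adj x c4 := tdg_of nD4 hx4 D1 (hC.D14 hT)
  have E24 : (twoDistGraph (twoDistGraph H)).Adj c2 c4 :=
    tdg_of (adj_not_tdg h24) hC.d24 (hC.D02 hT).symm (hC.D04 hT)
  have E23 : (twoDistGraph (twoDistGraph H)).Adj c2 c3 :=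
    tdg_of (adj_not_tdg hC.a23) hC.a23.ne (hC.D25 hT) (hC.D35 hT).symm
  have E34 : (twoDistGraph (twoDistGraph H)).Adj c3 c4 :=
    tdg_of (adj_not_tdg hC.a34) hC.a34.ne (hC.D13 hT).symm (hC.D14 hT)
  exact hT4.overlap E2.symm E24 E4 E23 E24 E34 hC.a23.ne' (Ne.symm hx3) hC.a34.ne

end Cop
end Package

/-! ### Concrete graphs on `Fin 6` -/

/-- Concrete graph on `Fin 6` given by a list of edges. -/
def selfPat (l : List (Fin 6 × Fin 6)) : SimpleGraph (Fin 6) :=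
  SimpleGraph.fromRel (fun i j => (i, j) ∈ l)

instance (l : List (Fin 6 × Fin 6)) : DecidableRel (selfPat l).Adj := fun a b =>
  decidable_of_iff _ (SimpleGraph.fromRel_adj _ a b).symm

def selfL1 : List (Fin 6 × Fin 6) := [(0,1),(1,2),(2,3),(3,4),(4,5),(5,0),(1,5)]
def selfL2 : List (Fin 6 × Fin 6) := [(0,1),(1,2),(2,3),(3,4),(4,5),(5,0),(1,5),(0,3)]
def selfL3 : List (Fin 6 × Fin 6) := [(0,1),(1,2),(2,3),(3,4),(4,5),(5,0),(1,5),(2,4)]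
def selfL4 : List (Fin 6 × Fin 6) := [(0,1),(1,2),(2,3),(3,4),(4,5),(5,0),(1,5),(0,3),(2,4)]
def selfY2 : List (Fin 6 × Fin 6) := [(0,2),(0,4),(1,3),(1,4),(2,4),(2,5),(3,5)]
def selfY3 : List (Fin 6 × Fin 6) := [(0,2),(0,4),(1,3),(1,4),(2,5),(3,5)]

lemma c5c3_eq : C5C3 = selfPat selfL1 := by
  ext i j
  rw [C5C3, selfPat, SimpleGraph.fromEdgeSet_adj, SimpleGraph.fromRel_adj]
  simp only [Set.mem_insert_iff, Set.mem_singleton_iff, Sym2.eq_iff]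
  revert i j
  decide

/-- A connected self 2-distance graph with pairwise vertex-disjoint triangles,
not an odd cycle of length ≥ 5, containing C₅|C₃ as a subgraph, is isomorphic
to C₅|C₃. -/
theorem iso_C5C3_of_disjointTriangles_hasC5C3 {V : Type*} [Fintype V]
    (G : SimpleGraph V)
    (hconn : G.Connected) (hcard : 1 < Fintype.card V)
    (hself : Nonempty (twoDistGraph G ≃g G))
    (htri : ∀ s t : Finset V, G.IsNClique 3 s → G.IsNClique 3 t → s ≠ t → Disjoint s t)
    (hcyc : ∀ n : ℕ, 5 ≤ n → Odd n → IsEmpty (G ≃g cycleGraph n))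
    (hsub : ∃ f : Fin 6 → V, Function.Injective f ∧
      ∀ i j, C5C3.Adj i j → G.Adj (f i) (f j)) :
    Nonempty (G ≃g C5C3) := by

  classical
  obtain ⟨φ⟩ := hself
  obtain ⟨f, hf, hadj⟩ := hsub
  have hadj' : ∀ i j : Fin 6, (selfPat selfL1).Adj i j → G.Adj (f i) (f j) := by
    intro i j h
    exact hadj i j (by rw [c5c3_eq]; exact h)
  have hC : Cop G (f 0) (f 1) (f 2) (f 3) (f 4) (f 5) :=
    ⟨hadj' 0 1 (by decide), hadj' 1 2 (by decide), hadj' 2 3 (by decide),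
     hadj' 3 4 (by decide), hadj' 4 5 (by decide), hadj' 5 0 (by decide),
     hadj' 1 5 (by decide),
     hf.ne (by decide), hf.ne (by decide), hf.ne (by decide), hf.ne (by decide),
     hf.ne (by decide), hf.ne (by decide), hf.ne (by decide), hf.ne (by decide)⟩
  have TD0 : TD G := htri
  have TD1 : TD (twoDistGraph G) := TD.of_iso φ TD0
  have TD2 : TD (twoDistGraph (twoDistGraph G)) := TD.of_iso (tdgIso φ) TD1
  -- unified neighbour restrictions
  have N0 : ∀ x, G.Adj x (f 0) → x = f 1 ∨ x = f 5 ∨ x = f 3 := by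
    by_cases h24 : G.Adj (f 2) (f 4)
    · exact hC.E0 TD0 TD1 TD2 h24
    · exact hC.C1 TD0 TD1 TD2 h24
  have N1 : ∀ x, G.Adj x (f 1) → x = f 0 ∨ x = f 2 ∨ x = f 5 := hC.C4 TD0 TD1
  have N2 : ∀ x, G.Adj x (f 2) → x = f 1 ∨ x = f 3 ∨ x = f 4 := by
    by_cases h24 : G.Adj (f 2) (f 4)
    · intro x h
      rcases (hC.prime h24).C4 TD0 TD1 x h with h' | h' | h'
      exacts [Or.inr (Or.inl h'), Or.inl h', Or.inr (Or.inr h')]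
    · intro x h
      rcases hC.C3 TD0 TD1 TD2 h24 x h with h' | h'
      exacts [Or.inl h', Or.inr (Or.inl h')]
  have N3 : ∀ x, G.Adj x (f 3) → x = f 2 ∨ x = f 4 ∨ x = f 0 := by
    by_cases h24 : G.Adj (f 2) (f 4)
    · exact (hC.prime h24).E0 TD0 TD1 TD2 hC.a15
    · exact hC.C2' TD0 TD1 h24
  have N4 : ∀ x, G.Adj x (f 4) → x = f 5 ∨ x = f 3 ∨ x = f 2 := by
    by_cases h24 : G.Adj (f 2) (f 4)
    · intro x h
      rcases (hC.prime h24).C5 TD0 TD1 x h with h' | h' | h'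
      exacts [Or.inr (Or.inl h'), Or.inl h', Or.inr (Or.inr h')]
    · intro x h
      rcases hC.mirror.C3 TD0 TD1 TD2 (fun hh => h24 hh.symm) x h with h' | h'
      exacts [Or.inl h', Or.inr (Or.inl h')]
  have N5 : ∀ x, G.Adj x (f 5) → x = f 0 ∨ x = f 4 ∨ x = f 1 := hC.C5 TD0 TD1
  -- closure: every vertex is one of the six
  have hstep : ∀ u x, G.Adj u x → (∃ i, f i = u) → (∃ j, f j = x) := by
    rintro u x hux ⟨i, rfl⟩
    fin_cases i
    · rcases N0 x hux.symm with h | h | h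
      exacts [⟨1, h.symm⟩, ⟨5, h.symm⟩, ⟨3, h.symm⟩]
    · rcases N1 x hux.symm with h | h | h
      exacts [⟨0, h.symm⟩, ⟨2, h.symm⟩, ⟨5, h.symm⟩]
    · rcases N2 x hux.symm with h | h | h
      exacts [⟨1, h.symm⟩, ⟨3, h.symm⟩, ⟨4, h.symm⟩]
    · rcases N3 x hux.symm with h | h | h
      exacts [⟨2, h.symm⟩, ⟨4, h.symm⟩, ⟨0, h.symm⟩]
    · rcases N4 x hux.symm with h | h | h
      exacts [⟨5, h.symm⟩, ⟨3, h.symm⟩, ⟨2, h.symm⟩]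
    · rcases N5 x hux.symm with h | h | h
      exacts [⟨0, h.symm⟩, ⟨4, h.symm⟩, ⟨1, h.symm⟩]
  have key : ∀ (a b : V), G.Walk a b → (∃ i, f i = a) → ∃ j, f j = b := by
    intro a b p
    induction p with
    | nil => exact id
    | cons h q ih => exact fun ha => ih (hstep _ _ h ha)
  have hsurj : Function.Surjective f := by
    intro x
    exact (hconn.preconnected (f 0) x).elim (fun p => key _ _ p ⟨0, rfl⟩)
  have hbij : Function.Bijective f := ⟨hf, hsurj⟩
  let e : Fin 6 ≃ V := Equiv.ofBijective f hbij
  have hfe : ∀ u, f (e.symm u) = u := fun u => e.apply_symm_apply u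
  -- classification of all adjacencies
  have hclass : ∀ i j : Fin 6, G.Adj (f i) (f j) →
      (selfPat selfL1).Adj i j ∨ (i, j) ∈ ([(0,3),(3,0),(2,4),(4,2)] : List (Fin 6 × Fin 6)) := by
    intro i j hij
    fin_cases j
    · rcases N0 (f i) hij with h | h | h
      · obtain rfl := hf h; exact Or.inl (by decide)
      · obtain rfl := hf h; exact Or.inl (by decide)
      · obtain rfl := hf h; exact Or.inr (by decide)
    · rcases N1 (f i) hij with h | h | h
      · obtain rfl := hf h; exact Or.inl (by decide)
      · obtain rfl := hf h; exact Or.inl (by decide)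
      · obtain rfl := hf h; exact Or.inl (by decide)
    · rcases N2 (f i) hij with h | h | h
      · obtain rfl := hf h; exact Or.inl (by decide)
      · obtain rfl := hf h; exact Or.inl (by decide)
      · obtain rfl := hf h; exact Or.inr (by decide)
    · rcases N3 (f i) hij with h | h | h
      · obtain rfl := hf h; exact Or.inl (by decide)
      · obtain rfl := hf h; exact Or.inl (by decide)
      · obtain rfl := hf h; exact Or.inr (by decide)
    · rcases N4 (f i) hij with h | h | h
      · obtain rfl := hf h; exact Or.inl (by decide)
      · obtain rfl := hf h; exact Or.inl (by decide)
      · obtain rfl := hf h; exact Or.inr (by decide)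
    · rcases N5 (f i) hij with h | h | h
      · obtain rfl := hf h; exact Or.inl (by decide)
      · obtain rfl := hf h; exact Or.inl (by decide)
      · obtain rfl := hf h; exact Or.inl (by decide)
  by_cases h03 : G.Adj (f 0) (f 3) <;> by_cases h24 : G.Adj (f 2) (f 4)
  · -- both extra edges: target selfL4, contradiction
    have hiff : ∀ i j : Fin 6, G.Adj (f i) (f j) ↔ (selfPat selfL4).Adj i j := by
      intro i j
      constructor
      · intro h
        rcases hclass i j h with hb | hm
        · exact (by decide :
            ∀ a b : Fin 6, (selfPat selfL1).Adj a b → (selfPat selfL4).Adj a b) i j hb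
        · simp only [List.mem_cons, List.not_mem_nil, or_false, Prod.mk.injEq] at hm
          rcases hm with ⟨rfl, rfl⟩ | ⟨rfl, rfl⟩ | ⟨rfl, rfl⟩ | ⟨rfl, rfl⟩ <;> decide
      · intro h
        rw [selfPat, SimpleGraph.fromRel_adj] at h
        obtain ⟨hne, h | h⟩ := h
        · simp only [selfL4, List.mem_cons, List.not_mem_nil, or_false, Prod.mk.injEq] at h
          rcases h with ⟨rfl, rfl⟩ | ⟨rfl, rfl⟩ | ⟨rfl, rfl⟩ | ⟨rfl, rfl⟩ | ⟨rfl, rfl⟩ |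
            ⟨rfl, rfl⟩ | ⟨rfl, rfl⟩ | ⟨rfl, rfl⟩ | ⟨rfl, rfl⟩
          exacts [hC.a01, hC.a12, hC.a23, hC.a34, hC.a45, hC.a50, hC.a15, h03, h24]
        · simp only [selfL4, List.mem_cons, List.not_mem_nil, or_false, Prod.mk.injEq] at h
          rcases h with ⟨rfl, rfl⟩ | ⟨rfl, rfl⟩ | ⟨rfl, rfl⟩ | ⟨rfl, rfl⟩ | ⟨rfl, rfl⟩ |
            ⟨rfl, rfl⟩ | ⟨rfl, rfl⟩ | ⟨rfl, rfl⟩ | ⟨rfl, rfl⟩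
          exacts [hC.a01.symm, hC.a12.symm, hC.a23.symm, hC.a34.symm, hC.a45.symm,
            hC.a50.symm, hC.a15.symm, h03.symm, h24.symm]
    have GX : G ≃g selfPat selfL4 := by
      refine ⟨e.symm, ?_⟩
      intro u v
      rw [← hiff (e.symm u) (e.symm v), hfe, hfe]
    have χ : twoDistGraph (selfPat selfL4) ≃g selfPat selfL4 :=
      ((tdgIso GX.symm).trans φ).trans GX
    have hDX : ∀ u v, (twoDistGraph (selfPat selfL4)).Adj u v ↔ (selfPat selfY3).Adj u v := by
      intro u v
      rw [tdg_adj]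
      revert u v
      decide
    have t01 : (selfPat selfY3).Adj (χ.symm 0) (χ.symm 1) :=
      (hDX _ _).mp (χ.symm.map_rel_iff.mpr (by decide))
    have t05 : (selfPat selfY3).Adj (χ.symm 0) (χ.symm 5) :=
      (hDX _ _).mp (χ.symm.map_rel_iff.mpr (by decide))
    have t15 : (selfPat selfY3).Adj (χ.symm 1) (χ.symm 5) :=
      (hDX _ _).mp (χ.symm.map_rel_iff.mpr (by decide))
    exact absurd ⟨t01, t05, t15⟩
      ((by decide : ∀ a b c : Fin 6, ¬((selfPat selfY3).Adj a b ∧ (selfPat selfY3).Adj a c ∧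
        (selfPat selfY3).Adj b c)) _ _ _)
  · -- only 03: target selfL2, contradiction via 4-cycle
    have hiff : ∀ i j : Fin 6, G.Adj (f i) (f j) ↔ (selfPat selfL2).Adj i j := by
      intro i j
      constructor
      · intro h
        rcases hclass i j h with hb | hm
        · exact (by decide :
            ∀ a b : Fin 6, (selfPat selfL1).Adj a b → (selfPat selfL2).Adj a b) i j hb
        · simp only [List.mem_cons, List.not_mem_nil, or_false, Prod.mk.injEq] at hm
          rcases hm with ⟨rfl, rfl⟩ | ⟨rfl, rfl⟩ | ⟨rfl, rfl⟩ | ⟨rfl, rfl⟩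
          · decide
          · decide
          · exact absurd h h24
          · exact absurd h.symm h24
      · intro h
        rw [selfPat, SimpleGraph.fromRel_adj] at h
        obtain ⟨hne, h | h⟩ := h
        · simp only [selfL2, List.mem_cons, List.not_mem_nil, or_false, Prod.mk.injEq] at h
          rcases h with ⟨rfl, rfl⟩ | ⟨rfl, rfl⟩ | ⟨rfl, rfl⟩ | ⟨rfl, rfl⟩ | ⟨rfl, rfl⟩ |
            ⟨rfl, rfl⟩ | ⟨rfl, rfl⟩ | ⟨rfl, rfl⟩
          exacts [hC.a01, hC.a12, hC.a23, hC.a34, hC.a45, hC.a50, hC.a15, h03]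
        · simp only [selfL2, List.mem_cons, List.not_mem_nil, or_false, Prod.mk.injEq] at h
          rcases h with ⟨rfl, rfl⟩ | ⟨rfl, rfl⟩ | ⟨rfl, rfl⟩ | ⟨rfl, rfl⟩ | ⟨rfl, rfl⟩ |
            ⟨rfl, rfl⟩ | ⟨rfl, rfl⟩ | ⟨rfl, rfl⟩
          exacts [hC.a01.symm, hC.a12.symm, hC.a23.symm, hC.a34.symm, hC.a45.symm,
            hC.a50.symm, hC.a15.symm, h03.symm]
    have GX : G ≃g selfPat selfL2 := by
      refine ⟨e.symm, ?_⟩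
      intro u v
      rw [← hiff (e.symm u) (e.symm v), hfe, hfe]
    have χ : twoDistGraph (selfPat selfL2) ≃g selfPat selfL2 :=
      ((tdgIso GX.symm).trans φ).trans GX
    have hDX : ∀ u v, (twoDistGraph (selfPat selfL2)).Adj u v ↔ (selfPat selfY2).Adj u v := by
      intro u v
      rw [tdg_adj]
      revert u v
      decide
    have q01 : (selfPat selfY2).Adj (χ.symm 0) (χ.symm 1) :=
      (hDX _ _).mp (χ.symm.map_rel_iff.mpr (by decide))
    have q12 : (selfPat selfY2).Adj (χ.symm 1) (χ.symm 2) :=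
      (hDX _ _).mp (χ.symm.map_rel_iff.mpr (by decide))
    have q23 : (selfPat selfY2).Adj (χ.symm 2) (χ.symm 3) :=
      (hDX _ _).mp (χ.symm.map_rel_iff.mpr (by decide))
    have q30 : (selfPat selfY2).Adj (χ.symm 3) (χ.symm 0) :=
      (hDX _ _).mp (χ.symm.map_rel_iff.mpr (by decide))
    have hne02 : χ.symm 0 ≠ χ.symm 2 := fun h =>
      absurd (χ.symm.toEquiv.injective h) (by decide)
    have hne13 : χ.symm 1 ≠ χ.symm 3 := fun h =>
      absurd (χ.symm.toEquiv.injective h) (by decide)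
    exact ((by decide : ∀ a b c d : Fin 6, (selfPat selfY2).Adj a b → (selfPat selfY2).Adj b c →
      (selfPat selfY2).Adj c d → (selfPat selfY2).Adj d a → a ≠ c → b ≠ d → False)
      _ _ _ _ q01 q12 q23 q30 hne02 hne13).elim
  · -- only 24: target selfL3, contradiction via triangle
    have hiff : ∀ i j : Fin 6, G.Adj (f i) (f j) ↔ (selfPat selfL3).Adj i j := by
      intro i j
      constructor
      · intro h
        rcases hclass i j h with hb | hm
        · exact (by decide :
            ∀ a b : Fin 6, (selfPat selfL1).Adj a b → (selfPat selfL3).Adj a b) i j hb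
        · simp only [List.mem_cons, List.not_mem_nil, or_false, Prod.mk.injEq] at hm
          rcases hm with ⟨rfl, rfl⟩ | ⟨rfl, rfl⟩ | ⟨rfl, rfl⟩ | ⟨rfl, rfl⟩
          · exact absurd h h03
          · exact absurd h.symm h03
          · decide
          · decide
      · intro h
        rw [selfPat, SimpleGraph.fromRel_adj] at h
        obtain ⟨hne, h | h⟩ := h
        · simp only [selfL3, List.mem_cons, List.not_mem_nil, or_false, Prod.mk.injEq] at h
          rcases h with ⟨rfl, rfl⟩ | ⟨rfl, rfl⟩ | ⟨rfl, rfl⟩ | ⟨rfl, rfl⟩ | ⟨rfl, rfl⟩ |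
            ⟨rfl, rfl⟩ | ⟨rfl, rfl⟩ | ⟨rfl, rfl⟩
          exacts [hC.a01, hC.a12, hC.a23, hC.a34, hC.a45, hC.a50, hC.a15, h24]
        · simp only [selfL3, List.mem_cons, List.not_mem_nil, or_false, Prod.mk.injEq] at h
          rcases h with ⟨rfl, rfl⟩ | ⟨rfl, rfl⟩ | ⟨rfl, rfl⟩ | ⟨rfl, rfl⟩ | ⟨rfl, rfl⟩ |
            ⟨rfl, rfl⟩ | ⟨rfl, rfl⟩ | ⟨rfl, rfl⟩
          exacts [hC.a01.symm, hC.a12.symm, hC.a23.symm, hC.a34.symm, hC.a45.symm,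
            hC.a50.symm, hC.a15.symm, h24.symm]
    have GX : G ≃g selfPat selfL3 := by
      refine ⟨e.symm, ?_⟩
      intro u v
      rw [← hiff (e.symm u) (e.symm v), hfe, hfe]
    have χ : twoDistGraph (selfPat selfL3) ≃g selfPat selfL3 :=
      ((tdgIso GX.symm).trans φ).trans GX
    have hDX : ∀ u v, (twoDistGraph (selfPat selfL3)).Adj u v ↔ (selfPat selfY3).Adj u v := by
      intro u v
      rw [tdg_adj]
      revert u v
      decide
    have t01 : (selfPat selfY3).Adj (χ.symm 0) (χ.symm 1) :=
      (hDX _ _).mp (χ.symm.map_rel_iff.mpr (by decide))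
    have t05 : (selfPat selfY3).Adj (χ.symm 0) (χ.symm 5) :=
      (hDX _ _).mp (χ.symm.map_rel_iff.mpr (by decide))
    have t15 : (selfPat selfY3).Adj (χ.symm 1) (χ.symm 5) :=
      (hDX _ _).mp (χ.symm.map_rel_iff.mpr (by decide))
    exact absurd ⟨t01, t05, t15⟩
      ((by decide : ∀ a b c : Fin 6, ¬((selfPat selfY3).Adj a b ∧ (selfPat selfY3).Adj a c ∧
        (selfPat selfY3).Adj b c)) _ _ _)
  · -- no extra edges: G ≅ C₅|C₃
    have hiff : ∀ i j : Fin 6, G.Adj (f i) (f j) ↔ (selfPat selfL1).Adj i j := by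
      intro i j
      constructor
      · intro h
        rcases hclass i j h with hb | hm
        · exact hb
        · simp only [List.mem_cons, List.not_mem_nil, or_false, Prod.mk.injEq] at hm
          rcases hm with ⟨rfl, rfl⟩ | ⟨rfl, rfl⟩ | ⟨rfl, rfl⟩ | ⟨rfl, rfl⟩
          · exact absurd h h03
          · exact absurd h.symm h03
          · exact absurd h h24
          · exact absurd h.symm h24
      · exact hadj' i j
    have GX : G ≃g selfPat selfL1 := by
      refine ⟨e.symm, ?_⟩
      intro u v
      rw [← hiff (e.symm u) (e.symm v), hfe, hfe]
    refine ⟨?_⟩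
    rw [c5c3_eq]
    exact GX
end
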